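/- Let K = ℚ(√D) with D ≥ 2 squarefree and (β_j) the ordered sequence of indecomposables with v_jβ_j = β_{j-1} + β_{j+1}. For α = 3β_j: if v_j ≥ 4 then p_K(α) = 3; if v_j = 3 then p_K(α) = 4; if v_j = 2 and v_{j-1} > 2 and v_{j+1} > 2 then p_K(α) = 6; and if v_j = 2 and (v_{j-1} = 2 or v_{j+1} = 2) then p_K(α) ≥ 8. -/

import Mathlib

noncomputable section

/-- `ω_D`: the standard generator of the ring of integers of `ℚ(√D)`. -/
def omegaD (D : ℕ) : ℝ := if D % 4 = 1 then (1 + Real.sqrt D) / 2 else Real.sqrt D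

/-- The Galois conjugate of `ω_D`. -/
def omegaD' (D : ℕ) : ℝ := if D % 4 = 1 then (1 - Real.sqrt D) / 2 else -Real.sqrt D

/-- Elements of `O_K` in coordinates: `(x, y)` represents `x + y·ω_D`. -/
abbrev OK : Type := ℤ × ℤ

/-- First real embedding. -/
def emb1 (D : ℕ) (a : OK) : ℝ := a.1 + a.2 * omegaD D

/-- Second real embedding (Galois conjugate). -/
def emb2 (D : ℕ) (a : OK) : ℝ := a.1 + a.2 * omegaD' D

/-- Galois conjugation on `O_K`. -/
def conjOK (D : ℕ) (a : OK) : OK := (a.1 + (if D % 4 = 1 then (1 : ℤ) else 0) * a.2, -a.2)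

/-- Total positivity. -/
def TotPos (D : ℕ) (a : OK) : Prop := 0 < emb1 D a ∧ 0 < emb2 D a

/-- The field norm. -/
def Nm (D : ℕ) (a : OK) : ℝ := emb1 D a * emb2 D a

/-- Indecomposability: totally positive and not a sum of two totally positive elements. -/
def Indec (D : ℕ) (a : OK) : Prop :=
  TotPos D a ∧ ¬ ∃ b c : OK, TotPos D b ∧ TotPos D c ∧ a = b + c

/-- Number of partitions of `α` into indecomposable parts (`p_K(α|I)`). -/
def pKI (D : ℕ) (α : OK) : ℕ :=
  Set.ncard {s : Multiset OK | (∀ x ∈ s, Indec D x) ∧ s.sum = α}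

/-- Number of partitions of `α` into totally positive parts (`p_K(α)`). -/
def pK (D : ℕ) (α : OK) : ℕ :=
  Set.ncard {s : Multiset OK | (∀ x ∈ s, TotPos D x) ∧ s.sum = α}

/-- Discriminant of `ℚ(√D)`. -/
def disc (D : ℕ) : ℕ := if D % 4 = 1 then D else 4 * D

/-- The ordered two-sided sequence of indecomposables together with
the coefficients `v j ≥ 2` from the Hejda–Kala relation `v_j β_j = β_{j-1} + β_{j+1}`. -/
structure BetaSeq (D : ℕ) (β : ℤ → OK) (v : ℤ → ℤ) : Prop where
  indec : ∀ j, Indec D (β j)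
  surj : ∀ a : OK, Indec D a → ∃ j, β j = a
  mono : StrictMono fun j => emb1 D (β j)
  zero : β 0 = (1, 0)
  conj_eq : ∀ j, β (-j) = conjOK D (β j)
  v_two_le : ∀ j, 2 ≤ v j
  v_symm : ∀ j, v (-j) = v j
  rel : ∀ j, v j • β j = β (j - 1) + β (j + 1)

/-- The continued fraction data of `ω_D = [⌈u₀/2⌉, \overline{u₁, …, u_s}]` (with `u_s = u_0`),
with tails `γ_0 = ω_D`, `γ_i = [u_i, u_{i+1}, …]` for `i ≥ 1`. -/
structure CFData (D : ℕ) (u : ℕ → ℕ) (γ : ℕ → ℝ) : Prop where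
  gamma_zero : γ 0 = omegaD D
  u_zero : (u 0 : ℤ) = 2 * ⌊omegaD D⌋ - (if D % 4 = 1 then 1 else 0)
  head : omegaD D = (⌊omegaD D⌋ : ℝ) + 1 / γ 1
  step : ∀ i, 1 ≤ i → γ i = u i + 1 / γ (i + 1)
  one_lt : ∀ i, 1 ≤ i → 1 < γ i
  floor_eq : ∀ i, 1 ≤ i → (u i : ℤ) = ⌊γ i⌋
  period : ∃ s, 1 ≤ s ∧ u s = u 0 ∧ ∀ i, 1 ≤ i → u (i + s) = u i

/-- The convergents `α_i = p_i + q_i ξ_D`, indexed by `i ≥ -1`. -/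
structure ConvData (D : ℕ) (u : ℕ → ℕ) (a : ℤ → OK) : Prop where
  neg_one : a (-1) = (1, 0)
  zero : a 0 = (⌊omegaD D⌋, 0) + (if D % 4 = 1 then ((-1 : ℤ), (1 : ℤ)) else (0, 1))
  recur : ∀ i : ℤ, -1 ≤ i → a (i + 2) = (u (i + 2).toNat : ℤ) • a (i + 1) + a i

/-- Semiconvergents `α_{i,r} = α_i + r·α_{i+1}`. -/
def semiconv (a : ℤ → OK) (i r : ℤ) : OK := a i + r • a (i + 1)

namespace Stmt14Aux

lemma emb1_add (D : ℕ) (a b : OK) : emb1 D (a + b) = emb1 D a + emb1 D b := by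
  simp only [emb1, Prod.fst_add, Prod.snd_add]; push_cast; ring

lemma emb2_add (D : ℕ) (a b : OK) : emb2 D (a + b) = emb2 D a + emb2 D b := by
  simp only [emb2, Prod.fst_add, Prod.snd_add]; push_cast; ring

lemma emb1_zsmul (D : ℕ) (n : ℤ) (a : OK) : emb1 D (n • a) = n * emb1 D a := by
  simp only [emb1, Prod.smul_fst, Prod.smul_snd, smul_eq_mul]; push_cast; ring

lemma emb2_zsmul (D : ℕ) (n : ℤ) (a : OK) : emb2 D (n • a) = n * emb2 D a := by
  simp only [emb2, Prod.smul_fst, Prod.smul_snd, smul_eq_mul]; push_cast; ring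

lemma emb1_nsmul (D : ℕ) (n : ℕ) (a : OK) : emb1 D (n • a) = n * emb1 D a := by
  have : (n : ℤ) • a = n • a := by exact_mod_cast natCast_zsmul a n
  rw [← this, emb1_zsmul]; push_cast; ring

lemma emb2_nsmul (D : ℕ) (n : ℕ) (a : OK) : emb2 D (n • a) = n * emb2 D a := by
  have : (n : ℤ) • a = n • a := by exact_mod_cast natCast_zsmul a n
  rw [← this, emb2_zsmul]; push_cast; ring

lemma emb1_zero (D : ℕ) : emb1 D 0 = 0 := by simp [emb1]
lemma emb2_zero (D : ℕ) : emb2 D 0 = 0 := by simp [emb2]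

lemma emb1_sum (D : ℕ) (s : Multiset OK) : emb1 D s.sum = (s.map (emb1 D)).sum := by
  induction s using Multiset.induction_on with
  | empty => simp [emb1_zero]
  | cons a s ih => simp [emb1_add, ih]

lemma emb2_sum (D : ℕ) (s : Multiset OK) : emb2 D s.sum = (s.map (emb2 D)).sum := by
  induction s using Multiset.induction_on with
  | empty => simp [emb2_zero]
  | cons a s ih => simp [emb2_add, ih]

lemma TotPos.add {D : ℕ} {a b : OK} (ha : TotPos D a) (hb : TotPos D b) : TotPos D (a + b) :=
  ⟨by rw [emb1_add]; exact add_pos ha.1 hb.1, by rw [emb2_add]; exact add_pos ha.2 hb.2⟩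

lemma TotPos.zsmul {D : ℕ} {a : OK} (ha : TotPos D a) {n : ℤ} (hn : 1 ≤ n) : TotPos D (n • a) := by
  constructor
  · rw [emb1_zsmul]; exact mul_pos (by exact_mod_cast lt_of_lt_of_le one_pos hn) ha.1
  · rw [emb2_zsmul]; exact mul_pos (by exact_mod_cast lt_of_lt_of_le one_pos hn) ha.2

lemma not_indec_three_smul {D : ℕ} {a : OK} (ha : TotPos D a) : ¬ Indec D ((3:ℤ) • a) := by
  intro h
  refine h.2 ⟨a, (2:ℤ) • a, ha, TotPos.zsmul ha one_le_two, ?_⟩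
  have : (3:ℤ) • a = (1:ℤ) • a + (2:ℤ) • a := by rw [← add_smul]; norm_num
  simpa using this

/-- the trace as an integer -/
def trZ (D : ℕ) (a : OK) : ℤ := 2 * a.1 + (if D % 4 = 1 then 1 else 0) * a.2

lemma omega_add_omega' (D : ℕ) : omegaD D + omegaD' D = (if D % 4 = 1 then 1 else 0 : ℤ) := by
  by_cases h : D % 4 = 1 <;> simp [omegaD, omegaD', h] <;> ring

lemma trZ_eq (D : ℕ) (a : OK) : (trZ D a : ℝ) = emb1 D a + emb2 D a := by
  have h := omega_add_omega' D
  simp only [trZ, emb1, emb2]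
  have key : (a.1:ℝ) + a.2 * omegaD D + ((a.1:ℝ) + a.2 * omegaD' D)
      = 2*a.1 + a.2 * (omegaD D + omegaD' D) := by ring
  by_cases hd : D % 4 = 1 <;> simp only [hd, if_true, if_false] at h ⊢ <;>
    push_cast <;> rw [key, h] <;> push_cast <;> ring

lemma trZ_pos {D : ℕ} {a : OK} (ha : TotPos D a) : 1 ≤ trZ D a := by
  have h : (0:ℝ) < trZ D a := by rw [trZ_eq]; exact add_pos ha.1 ha.2
  have : (0:ℤ) < trZ D a := by exact_mod_cast h
  omega

lemma trZ_add (D : ℕ) (a b : OK) : trZ D (a + b) = trZ D a + trZ D b := by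
  simp only [trZ, Prod.fst_add, Prod.snd_add]; ring

lemma trZ_sum (D : ℕ) (s : Multiset OK) : trZ D s.sum = (s.map (trZ D)).sum := by
  induction s using Multiset.induction_on with
  | empty => simp [trZ]
  | cons a s ih => simp [trZ_add, ih]

end Stmt14Aux
namespace Stmt14Aux

/-- every totally positive element decomposes into indecomposables -/
lemma exists_indec_decomp (D : ℕ) : ∀ (n : ℕ) (a : OK), trZ D a ≤ n → TotPos D a →
    ∃ u : Multiset OK, u ≠ 0 ∧ (∀ x ∈ u, Indec D x) ∧ u.sum = a := by
  intro n
  induction n with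
  | zero => intro a hn ha; exact absurd (trZ_pos ha) (by omega)
  | succ n ih =>
    intro a hn ha
    by_cases hi : Indec D a
    · exact ⟨{a}, by simp, by simpa using hi, by simp⟩
    · have : ∃ b c : OK, TotPos D b ∧ TotPos D c ∧ a = b + c := by
        by_contra h; exact hi ⟨ha, h⟩
      obtain ⟨b, c, hb, hc, rfl⟩ := this
      have htb : trZ D b ≤ n := by
        have := trZ_pos hc; have := trZ_add D b c; omega
      have htc : trZ D c ≤ n := by
        have := trZ_pos hb; have := trZ_add D b c; omega
      obtain ⟨ub, hub0, hub, hubs⟩ := ih b htb hb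
      obtain ⟨uc, huc0, huc, hucs⟩ := ih c htc hc
      refine ⟨ub + uc, by simp [Multiset.eq_zero_iff_forall_notMem] at hub0 ⊢; tauto, ?_, by
        simp [hubs, hucs]⟩
      intro x hx; rcases Multiset.mem_add.mp hx with h | h
      · exact hub x h
      · exact huc x h

lemma exists_refinement (D : ℕ) (s : Multiset OK) (hs : ∀ x ∈ s, TotPos D x) :
    ∃ t : Multiset (Multiset OK), (∀ u ∈ t, u ≠ 0 ∧ ∀ x ∈ u, Indec D x) ∧
      t.map Multiset.sum = s := by
  induction s using Multiset.induction_on with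
  | empty => exact ⟨0, by simp⟩
  | cons a s ih =>
    obtain ⟨t, ht, hts⟩ := ih (fun x hx => hs x (Multiset.mem_cons_of_mem hx))
    obtain ⟨u, hu0, hui, hus⟩ :=
      exists_indec_decomp D (trZ D a).toNat a (by simp [Int.le_toNat];) (hs a (Multiset.mem_cons_self a s))
    exact ⟨u ::ₘ t, by
      intro w hw; rcases Multiset.mem_cons.mp hw with rfl | h
      · exact ⟨hu0, hui⟩
      · exact ht w h, by simp [hts, hus]⟩

end Stmt14Aux
namespace Stmt14Aux

lemma omega_sub_omega' {D : ℕ} (hD : 2 ≤ D) : 1 ≤ omegaD D - omegaD' D := by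
  have h1 : (1:ℝ) ≤ Real.sqrt D := by
    rw [show (1:ℝ) = Real.sqrt 1 by simp]
    exact Real.sqrt_le_sqrt (by exact_mod_cast Nat.one_le_of_lt hD)
  by_cases hd : D % 4 = 1 <;> simp [omegaD, omegaD', hd] <;> linarith

lemma omega_le {D : ℕ} (hD : 2 ≤ D) : omegaD D ≤ D := by
  have h0 : (0:ℝ) ≤ (D:ℝ) := by positivity
  have hD1 : (1:ℝ) ≤ (D:ℝ) := by exact_mod_cast Nat.one_le_of_lt hD
  have h1 : Real.sqrt D ≤ D := by
    have := Real.sqrt_le_sqrt (show (D:ℝ) ≤ (D:ℝ)^2 by nlinarith)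
    rwa [Real.sqrt_sq h0] at this
  by_cases hd : D % 4 = 1 <;> simp only [omegaD, hd, if_true, if_false, ite_true, ite_false, eq_self_iff_true, not_false_eq_true] <;> linarith

lemma omega'_le {D : ℕ} (hD : 2 ≤ D) : -(D:ℝ) ≤ omegaD' D := by
  have h0 : (0:ℝ) ≤ (D:ℝ) := by positivity
  have hD1 : (1:ℝ) ≤ (D:ℝ) := by exact_mod_cast Nat.one_le_of_lt hD
  have h1 : Real.sqrt D ≤ D := by
    have := Real.sqrt_le_sqrt (show (D:ℝ) ≤ (D:ℝ)^2 by nlinarith)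
    rwa [Real.sqrt_sq h0] at this
  by_cases hd : D % 4 = 1 <;> simp only [omegaD', hd, if_true, if_false, ite_true, ite_false, eq_self_iff_true, not_false_eq_true] <;> linarith

/-- the set of partitions into totally positive parts is finite -/
lemma part_finite (D : ℕ) (hD : 2 ≤ D) (α : OK) :
    {s : Multiset OK | (∀ x ∈ s, TotPos D x) ∧ s.sum = α}.Finite := by
  set B : ℤ := trZ D α with hB
  set C : ℤ := B * (1 + D) with hC
  set F : Finset OK := Finset.Icc (-C, -B) (C, B) with hF
  set M : Multiset OK := B.toNat • F.val with hM
  apply Set.Finite.subset (Multiset.toFinset (Multiset.powerset M)).finite_toSet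
  rintro s ⟨hpos, hsum⟩
  simp only [Finset.mem_coe, Multiset.mem_toFinset, Multiset.mem_powerset]
  -- basic sums
  have hsum1 : emb1 D α = (s.map (emb1 D)).sum := by rw [← hsum, emb1_sum]
  have hsum2 : emb2 D α = (s.map (emb2 D)).sum := by rw [← hsum, emb2_sum]
  have htr : B = (s.map (trZ D)).sum := by rw [hB, ← hsum, trZ_sum]
  -- each part bounded
  have hcard : (Multiset.card s : ℤ) ≤ B := by
    rw [htr]
    have h := Multiset.card_nsmul_le_sum (s := s.map (trZ D)) (a := (1:ℤ))
      (by intro x hx; obtain ⟨y, hy, rfl⟩ := Multiset.mem_map.mp hx; exact trZ_pos (hpos y hy))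
    simpa using h
  have hmem : ∀ x ∈ s, x ∈ F := by
    intro x hx
    obtain ⟨s', rfl⟩ := Multiset.exists_cons_of_mem hx
    have hx' := hpos x (Multiset.mem_cons_self x s')
    have hrest1 : (0:ℝ) ≤ (s'.map (emb1 D)).sum :=
      Multiset.sum_nonneg (by
        intro z hz; obtain ⟨y, hy, rfl⟩ := Multiset.mem_map.mp hz
        exact le_of_lt (hpos y (Multiset.mem_cons_of_mem hy)).1)
    have hrest2 : (0:ℝ) ≤ (s'.map (emb2 D)).sum :=
      Multiset.sum_nonneg (by
        intro z hz; obtain ⟨y, hy, rfl⟩ := Multiset.mem_map.mp hz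
        exact le_of_lt (hpos y (Multiset.mem_cons_of_mem hy)).2)
    have hb1 : emb1 D x ≤ B := by
      have : emb1 D x + (s'.map (emb1 D)).sum = emb1 D α := by rw [hsum1]; simp
      have hBr : emb1 D α ≤ (B:ℝ) := by
        rw [hB, trZ_eq]
        rw [hsum2]
        have : (0:ℝ) ≤ (Multiset.map (emb2 D) (x ::ₘ s')).sum := by
          apply Multiset.sum_nonneg
          intro z hz; obtain ⟨y, hy, rfl⟩ := Multiset.mem_map.mp hz
          exact le_of_lt (hpos y hy).2
        linarith
      linarith
    have hb2 : emb2 D x ≤ B := by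
      have : emb2 D x + (s'.map (emb2 D)).sum = emb2 D α := by rw [hsum2]; simp
      have hBr : emb2 D α ≤ (B:ℝ) := by
        rw [hB, trZ_eq, hsum1]
        have : (0:ℝ) ≤ (Multiset.map (emb1 D) (x ::ₘ s')).sum := by
          apply Multiset.sum_nonneg
          intro z hz; obtain ⟨y, hy, rfl⟩ := Multiset.mem_map.mp hz
          exact le_of_lt (hpos y hy).1
        linarith
      linarith
    -- bound coordinates
    have hω := omega_sub_omega' hD
    have hx1 : (0:ℝ) < x.1 + x.2 * omegaD D := hx'.1
    have hx2 : (0:ℝ) < x.1 + x.2 * omegaD' D := hx'.2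
    have he1 : emb1 D x = x.1 + x.2 * omegaD D := rfl
    have he2 : emb2 D x = x.1 + x.2 * omegaD' D := rfl
    have hy : |(x.2:ℝ)| ≤ B := by
      rw [abs_le]
      constructor
      · nlinarith [hb1, hx2, hω]
      · nlinarith [hb2, hx1, hω]
    have hBnn : (0:ℝ) ≤ (B:ℝ) := le_trans (abs_nonneg _) hy
    have hωD := omega_le hD
    have hω'D := omega'_le hD
    have hx1' : |(x.1:ℝ)| ≤ C := by
      rw [abs_le]
      have hD0 : (0:ℝ) ≤ (D:ℝ) := by positivity
      rw [hC]
      push_cast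
      constructor
      · rcases abs_le.mp hy with ⟨hy1, hy2⟩
        rcases le_or_gt (x.2:ℝ) 0 with h | h
        · nlinarith [hx1]
        · nlinarith [hx2]
      · rcases abs_le.mp hy with ⟨hy1, hy2⟩
        rcases le_or_gt (x.2:ℝ) 0 with h | h
        · nlinarith [hb2, he2]
        · nlinarith [hb1, he1]
    rw [hF, Finset.mem_Icc]
    constructor <;> constructor
    · exact_mod_cast neg_le_of_abs_le hx1'
    · exact_mod_cast neg_le_of_abs_le hy
    · exact_mod_cast le_of_abs_le hx1'
    · exact_mod_cast le_of_abs_le hy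
  -- conclude s ≤ M
  rw [Multiset.le_iff_count]
  intro x
  by_cases hxs : x ∈ s
  · have h1 : Multiset.count x s ≤ Multiset.card s := Multiset.count_le_card x s
    have h2 : Multiset.count x M = B.toNat * Multiset.count x F.val := by
      rw [hM, Multiset.count_nsmul]
    have h3 : Multiset.count x F.val = 1 := by
      rw [Multiset.count_eq_one_of_mem F.nodup (hmem x hxs)]
    rw [h2, h3, mul_one]
    omega
  · simp [Multiset.count_eq_zero_of_notMem hxs]
end Stmt14Aux
namespace Stmt14Aux

lemma card_one_le {u : Multiset OK} (h : u ≠ 0) : 1 ≤ Multiset.card u :=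
  Multiset.card_pos.mpr h

lemma nat_multiset_three (n : Multiset ℕ) (h1 : ∀ x ∈ n, 1 ≤ x) (hs : n.sum = 3) :
    n = {3} ∨ n = {1, 2} ∨ n = {1, 1, 1} := by
  have hc : Multiset.card n ≤ 3 := by
    have h := Multiset.card_nsmul_le_sum (s := n) (a := 1) h1
    simpa [hs] using h
  interval_cases h : Multiset.card n
  · rw [Multiset.card_eq_zero] at h; simp [h] at hs
  · rw [Multiset.card_eq_one] at h; obtain ⟨x, rfl⟩ := h
    simp at hs; left; rw [hs]
  · rw [Multiset.card_eq_two] at h; obtain ⟨x, y, rfl⟩ := h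
    have hx := h1 x (by simp); have hy := h1 y (by simp)
    simp at hs
    right; left
    have : (x = 1 ∧ y = 2) ∨ (x = 2 ∧ y = 1) := by omega
    rcases this with ⟨rfl, rfl⟩ | ⟨rfl, rfl⟩
    · rfl
    · exact Multiset.cons_swap 2 1 0
  · rw [Multiset.card_eq_three] at h; obtain ⟨x, y, z, rfl⟩ := h
    have hx := h1 x (by simp); have hy := h1 y (by simp); have hz := h1 z (by simp)
    simp at hs
    right; right
    have : x = 1 ∧ y = 1 ∧ z = 1 := by omega
    obtain ⟨rfl, rfl, rfl⟩ := this; rfl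

lemma three_nsmul_eq (b : OK) : (3:ℕ) • b = b + b + b := by
  rw [show (3:ℕ) = 2 + 1 from rfl, add_nsmul, two_nsmul, one_nsmul]

lemma grouping_replicate (b : OK) (t : Multiset (Multiset OK))
    (h0 : ∀ u ∈ t, u ≠ 0) (hj : t.join = Multiset.replicate 3 b) :
    t.map Multiset.sum = {b + b + b} ∨ t.map Multiset.sum = {b + b, b} ∨
      t.map Multiset.sum = {b, b, b} := by
  have hall : ∀ u ∈ t, u = Multiset.replicate (Multiset.card u) b := by
    intro u hu
    rw [Multiset.eq_replicate]
    refine ⟨rfl, fun x hx => ?_⟩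
    have : x ∈ t.join := Multiset.mem_join.mpr ⟨u, hu, hx⟩
    rw [hj] at this
    exact Multiset.eq_of_mem_replicate this
  have hmap : t.map Multiset.sum = (t.map Multiset.card).map (fun k => k • b) := by
    rw [Multiset.map_map]
    apply Multiset.map_congr rfl
    intro u hu
    simp only [Function.comp_apply]
    conv_lhs => rw [hall u hu]
    rw [Multiset.sum_replicate]
  have hcards : (t.map Multiset.card).sum = 3 := by
    rw [← Multiset.card_join, hj, Multiset.card_replicate]
  have h1 : ∀ x ∈ t.map Multiset.card, 1 ≤ x := by
    intro x hx; obtain ⟨u, hu, rfl⟩ := Multiset.mem_map.mp hx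
    exact card_one_le (h0 u hu)
  rcases nat_multiset_three _ h1 hcards with h | h | h <;> rw [hmap, h]
  · left
    rw [Multiset.map_singleton, three_nsmul_eq]
  · right; left
    simp only [Multiset.insert_eq_cons, Multiset.map_cons, Multiset.map_singleton,
      one_nsmul, two_nsmul]
    exact Multiset.cons_swap _ _ _
  · right; right
    simp [one_nsmul]

lemma grouping_pair (a b : OK) (t : Multiset (Multiset OK))
    (h0 : ∀ u ∈ t, u ≠ 0) (hj : t.join = {a, b}) :
    t.map Multiset.sum = {a + b} ∨ t.map Multiset.sum = {a, b} := by
  have hcards : (t.map Multiset.card).sum = 2 := by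
    rw [← Multiset.card_join, hj]; rfl
  have h1 : ∀ x ∈ t.map Multiset.card, 1 ≤ x := by
    intro x hx; obtain ⟨u, hu, rfl⟩ := Multiset.mem_map.mp hx
    exact card_one_le (h0 u hu)
  have hc : Multiset.card t ≤ 2 := by
    have h := Multiset.card_nsmul_le_sum (s := t.map Multiset.card) (a := 1) h1
    simpa [hcards] using h
  interval_cases h : Multiset.card t
  · rw [Multiset.card_eq_zero] at h; subst h
    rw [Multiset.join_zero] at hj
    exact absurd hj.symm (Multiset.cons_ne_zero)
  · rw [Multiset.card_eq_one] at h; obtain ⟨u, rfl⟩ := h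
    left
    have : u = {a, b} := by simpa [Multiset.join_cons] using hj
    rw [this]; simp [Multiset.sum_cons]
  · rw [Multiset.card_eq_two] at h; obtain ⟨u, w, rfl⟩ := h
    have h2 : Multiset.card u + Multiset.card w = 2 := by simpa using hcards
    have hu1 := card_one_le (h0 u (by simp))
    have hw1 := card_one_le (h0 w (by simp))
    obtain ⟨x, hx⟩ := Multiset.card_eq_one.mp (show Multiset.card u = 1 by omega)
    obtain ⟨y, hy⟩ := Multiset.card_eq_one.mp (show Multiset.card w = 1 by omega)
    right
    subst hx; subst hy
    have : ({x, y} : Multiset OK) = {a, b} := by simpa [Multiset.join_cons] using hj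
    simpa using this

lemma grouping_three (a b c : OK) (hab : a ≠ b) (hac : a ≠ c) (hbc : b ≠ c)
    (t : Multiset (Multiset OK))
    (h0 : ∀ u ∈ t, u ≠ 0) (hj : t.join = {a, b, c}) :
    t.map Multiset.sum = {a + b + c} ∨
    t.map Multiset.sum = {a, b + c} ∨ t.map Multiset.sum = {b, a + c} ∨
    t.map Multiset.sum = {c, a + b} ∨ t.map Multiset.sum = {a, b, c} := by
  have hcards : (t.map Multiset.card).sum = 3 := by
    rw [← Multiset.card_join, hj]; rfl
  have h1 : ∀ x ∈ t.map Multiset.card, 1 ≤ x := by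
    intro x hx; obtain ⟨u, hu, rfl⟩ := Multiset.mem_map.mp hx
    exact card_one_le (h0 u hu)
  have hc : Multiset.card t ≤ 3 := by
    have h := Multiset.card_nsmul_le_sum (s := t.map Multiset.card) (a := 1) h1
    simpa [hcards] using h
  have key : ∀ u w : Multiset OK, u + w = ({a, b, c} : Multiset OK) → Multiset.card u = 1 →
      ({Multiset.sum u, Multiset.sum w} : Multiset OK) = {a, b + c} ∨
      ({Multiset.sum u, Multiset.sum w} : Multiset OK) = {b, a + c} ∨
      ({Multiset.sum u, Multiset.sum w} : Multiset OK) = {c, a + b} := by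
    intro u w huw hcu
    obtain ⟨x, rfl⟩ := Multiset.card_eq_one.mp hcu
    have hxw : x ::ₘ w = ({a, b, c} : Multiset OK) := by simpa using huw
    have hxmem : x ∈ ({a, b, c} : Multiset OK) := by rw [← hxw]; simp
    have hw : w = ({a, b, c} : Multiset OK).erase x := by
      rw [← hxw, Multiset.erase_cons_head]
    simp only [Multiset.insert_eq_cons, Multiset.mem_cons, Multiset.mem_singleton] at hxmem
    rcases hxmem with rfl | rfl | rfl
    · left
      rw [hw, show ({x, b, c} : Multiset OK) = x ::ₘ {b, c} from rfl, Multiset.erase_cons_head]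
      simp [Multiset.sum_cons]
    · right; left
      rw [hw, show ({a, x, c} : Multiset OK) = a ::ₘ (x ::ₘ {c}) from rfl,
        Multiset.erase_cons_tail _ hab, Multiset.erase_cons_head]
      simp [Multiset.sum_cons]
    · right; right
      rw [hw, show ({a, b, x} : Multiset OK) = a ::ₘ (b ::ₘ {x}) from rfl,
        Multiset.erase_cons_tail _ hac, Multiset.erase_cons_tail _ hbc,
        Multiset.erase_singleton]
      simp [Multiset.sum_cons, add_comm]
  interval_cases h : Multiset.card t
  · rw [Multiset.card_eq_zero] at h; subst h
    rw [Multiset.join_zero] at hj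
    exact absurd hj.symm (Multiset.cons_ne_zero)
  · rw [Multiset.card_eq_one] at h; obtain ⟨u, rfl⟩ := h
    left
    have : u = {a, b, c} := by simpa [Multiset.join_cons] using hj
    rw [this]; simp [Multiset.sum_cons, add_assoc]
  · rw [Multiset.card_eq_two] at h; obtain ⟨u, w, rfl⟩ := h
    have hjoin : u + w = ({a, b, c} : Multiset OK) := by simpa [Multiset.join_cons] using hj
    have h2 : Multiset.card u + Multiset.card w = 3 := by simpa using hcards
    have hu1 := card_one_le (h0 u (by simp))
    have hw1 := card_one_le (h0 w (by simp))
    rcases show Multiset.card u = 1 ∨ Multiset.card w = 1 by omega with hcu | hcw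
    · have := key u w hjoin hcu
      rw [show Multiset.map Multiset.sum ({u, w} : Multiset (Multiset OK))
          = {u.sum, w.sum} from by simp]
      tauto
    · have hjoin' : w + u = ({a, b, c} : Multiset OK) := by rwa [add_comm] at hjoin
      have := key w u hjoin' hcw
      have hswap : ({u.sum, w.sum} : Multiset OK) = {w.sum, u.sum} := Multiset.cons_swap _ _ _
      rw [show Multiset.map Multiset.sum ({u, w} : Multiset (Multiset OK))
          = {u.sum, w.sum} from by simp]
      rw [hswap]
      tauto
  · rw [Multiset.card_eq_three] at h; obtain ⟨u1, u2, u3, rfl⟩ := h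
    have hjoin : u1 + u2 + u3 = ({a, b, c} : Multiset OK) := by
      simpa [Multiset.join_cons, add_assoc] using hj
    have h3 : Multiset.card u1 + (Multiset.card u2 + Multiset.card u3) = 3 := by
      simpa using hcards
    have h11 := card_one_le (h0 u1 (by simp))
    have h12 := card_one_le (h0 u2 (by simp))
    have h13 := card_one_le (h0 u3 (by simp))
    obtain ⟨x, rfl⟩ := Multiset.card_eq_one.mp (show Multiset.card u1 = 1 by omega)
    obtain ⟨y, rfl⟩ := Multiset.card_eq_one.mp (show Multiset.card u2 = 1 by omega)
    obtain ⟨z, rfl⟩ := Multiset.card_eq_one.mp (show Multiset.card u3 = 1 by omega)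
    right; right; right; right
    have : ({x, y, z} : Multiset OK) = {a, b, c} := by
      simpa [Multiset.singleton_add] using hjoin
    simpa using this
end Stmt14Aux
namespace Stmt14Aux

lemma pair_eq {γ : Type*} {a b c d : γ} (h : ({a, b} : Multiset γ) = {c, d}) :
    (a = c ∧ b = d) ∨ (a = d ∧ b = c) := by
  rcases Multiset.cons_eq_cons.mp h with ⟨h1, h2⟩ | ⟨hne, cs, h1, h2⟩
  · left; exact ⟨h1, by simpa using h2⟩
  · right
    have hcs : cs = 0 := by
      have hc := congrArg Multiset.card h2
      simp only [Multiset.card_singleton, Multiset.card_cons] at hc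
      exact Multiset.card_eq_zero.mp (by omega)
    subst hcs
    simp only [Multiset.cons_zero, Multiset.singleton_inj] at h1 h2
    exact ⟨h2.symm, h1⟩

lemma ne_of_mem_not_mem {γ : Type*} {s t : Multiset γ} {w : γ} (h1 : w ∈ s) (h2 : w ∉ t) :
    s ≠ t := fun e => h2 (e ▸ h1)

lemma card_ne {γ : Type*} {s t : Multiset γ} (h : Multiset.card s ≠ Multiset.card t) : s ≠ t :=
  fun e => h (congrArg _ e)

end Stmt14Aux
namespace Stmt14Aux

lemma emb1_conj (D : ℕ) (a : OK) : emb1 D (conjOK D a) = emb2 D a := by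
  have h := omega_add_omega' D
  simp only [conjOK, emb1, emb2]
  by_cases hd : D % 4 = 1 <;> simp only [hd, if_true, if_false] at h ⊢ <;> push_cast <;>
    linear_combination (-(a.2 : ℝ)) * h

lemma exists_index_multiset (D : ℕ) {β : ℤ → OK} {v : ℤ → ℤ} (hβ : BetaSeq D β v)
    (s : Multiset OK) (hs : ∀ x ∈ s, Indec D x) : ∃ K : Multiset ℤ, K.map β = s := by
  induction s using Multiset.induction_on with
  | empty => exact ⟨0, rfl⟩
  | cons a s ih =>
    obtain ⟨K, hK⟩ := ih (fun x hx => hs x (Multiset.mem_cons_of_mem hx))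
    obtain ⟨k, hk⟩ := hβ.surj a (hs a (Multiset.mem_cons_self a s))
    exact ⟨k ::ₘ K, by rw [Multiset.map_cons, hK, hk]⟩

section SeqInd

variable (v : ℤ → ℤ) (W : ℤ → ℝ)

lemma seq_rightInd (hv : ∀ k, (2:ℝ) ≤ (v k : ℝ))
    (hrec : ∀ k : ℤ, W (k-1) + W (k+1) = (v k : ℝ) * W k) (j : ℤ) (δ : ℝ) (hδ : 0 ≤ δ)
    (h0 : 0 ≤ W j) (h1 : W j + δ ≤ W (j+1)) :
    ∀ n : ℕ, 0 ≤ W (j + n) ∧ W (j + n) + δ ≤ W (j + n + 1) := by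
  intro n
  induction n with
  | zero =>
    constructor
    · simpa using h0
    · push_cast; simpa using h1
  | succ n ih =>
    have e1 : j + ((n + 1 : ℕ) : ℤ) = j + n + 1 := by push_cast; ring
    have h := hrec (j + n + 1)
    rw [show j + (n:ℤ) + 1 - 1 = j + (n:ℤ) from by ring] at h
    have hW1 : 0 ≤ W (j + n + 1) := by linarith [ih.1, ih.2]
    constructor
    · rw [e1]; exact hW1
    · rw [e1, show j + (n:ℤ) + 1 + 1 = j + (n:ℤ) + 1 + 1 from rfl]
      nlinarith [hv (j + (n:ℤ) + 1), ih.1, ih.2, hW1]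

lemma seq_rightChain (hv : ∀ k, (2:ℝ) ≤ (v k : ℝ))
    (hrec : ∀ k : ℤ, W (k-1) + W (k+1) = (v k : ℝ) * W k) (j : ℤ) (δ : ℝ) (hδ : 0 ≤ δ)
    (h0 : 0 ≤ W j) (h1 : W j + δ ≤ W (j+1)) :
    ∀ m n : ℕ, m ≤ n → W (j + m) + ((n - m : ℕ) : ℝ) * δ ≤ W (j + n) := by
  intro m n hmn
  induction n with
  | zero =>
    have : m = 0 := Nat.le_zero.mp hmn
    subst this; simp
  | succ n ih =>
    rcases Nat.lt_or_ge m (n+1) with h | h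
    · have hm : m ≤ n := by omega
      have h1' := ih hm
      have h2 := (seq_rightInd v W hv hrec j δ hδ h0 h1 n).2
      have e1 : j + ((n + 1 : ℕ) : ℤ) = j + n + 1 := by push_cast; ring
      have e2 : ((n + 1 - m : ℕ) : ℝ) = ((n - m : ℕ) : ℝ) + 1 := by
        have : n + 1 - m = (n - m) + 1 := by omega
        rw [this]; push_cast; ring
      rw [e1, e2]; linarith
    · have : m = n + 1 := by omega
      subst this; simp

lemma seq_leftInd (hv : ∀ k, (2:ℝ) ≤ (v k : ℝ))
    (hrec : ∀ k : ℤ, W (k-1) + W (k+1) = (v k : ℝ) * W k) (j : ℤ) (δ : ℝ) (hδ : 0 ≤ δ)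
    (h0 : 0 ≤ W j) (h1 : W j + δ ≤ W (j-1)) :
    ∀ n : ℕ, 0 ≤ W (j - n) ∧ W (j - n) + δ ≤ W (j - n - 1) := by
  intro n
  have key := seq_rightInd (fun k => v (2*j - k)) (fun k => W (2*j - k))
    (fun k => hv _) (by
      intro k
      show W (2*j - (k-1)) + W (2*j - (k+1)) = ((v (2*j - k) : ℤ) : ℝ) * W (2*j - k)
      rw [show 2*j - (k-1) = 2*j - k + 1 from by ring, show 2*j - (k+1) = 2*j - k - 1 from by ring]
      linarith [hrec (2*j - k)]) j δ hδ
    (by show (0:ℝ) ≤ W (2*j - j); rw [show 2*j - j = j from by ring]; exact h0)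
    (by show W (2*j - j) + δ ≤ W (2*j - (j+1))
        rw [show 2*j - j = j from by ring, show 2*j - (j+1) = j - 1 from by ring]; exact h1) n
  have key1 : 0 ≤ W (2*j - (j + (n:ℤ))) := key.1
  have key2 : W (2*j - (j + (n:ℤ))) + δ ≤ W (2*j - (j + (n:ℤ) + 1)) := key.2
  rw [show 2*j - (j + (n:ℤ)) = j - n from by ring] at key1 key2
  rw [show 2*j - (j + (n:ℤ) + 1) = j - n - 1 from by ring] at key2
  exact ⟨key1, key2⟩

lemma seq_leftChain (hv : ∀ k, (2:ℝ) ≤ (v k : ℝ))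
    (hrec : ∀ k : ℤ, W (k-1) + W (k+1) = (v k : ℝ) * W k) (j : ℤ) (δ : ℝ) (hδ : 0 ≤ δ)
    (h0 : 0 ≤ W j) (h1 : W j + δ ≤ W (j-1)) :
    ∀ m n : ℕ, m ≤ n → W (j - m) + ((n - m : ℕ) : ℝ) * δ ≤ W (j - n) := by
  intro m n hmn
  have key := seq_rightChain (fun k => v (2*j - k)) (fun k => W (2*j - k))
    (fun k => hv _) (by
      intro k
      show W (2*j - (k-1)) + W (2*j - (k+1)) = ((v (2*j - k) : ℤ) : ℝ) * W (2*j - k)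
      rw [show 2*j - (k-1) = 2*j - k + 1 from by ring, show 2*j - (k+1) = 2*j - k - 1 from by ring]
      linarith [hrec (2*j - k)]) j δ hδ
    (by show (0:ℝ) ≤ W (2*j - j); rw [show 2*j - j = j from by ring]; exact h0)
    (by show W (2*j - j) + δ ≤ W (2*j - (j+1))
        rw [show 2*j - j = j from by ring, show 2*j - (j+1) = j - 1 from by ring]; exact h1)
    m n hmn
  have key' : W (2*j - (j + (m:ℤ))) + ((n - m : ℕ) : ℝ) * δ ≤ W (2*j - (j + (n:ℤ))) := key
  rw [show 2*j - (j + (n:ℤ)) = j - n from by ring,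
     show 2*j - (j + (m:ℤ)) = j - m from by ring] at key'
  exact key'

end SeqInd
end Stmt14Aux
namespace Stmt14Aux

/-- denominator -/
def deltaF (D : ℕ) (β : ℤ → OK) (j : ℤ) : ℝ :=
  emb1 D (β j) * emb2 D (β (j+1)) - emb1 D (β (j+1)) * emb2 D (β j)

def lamF (D : ℕ) (β : ℤ → OK) (j : ℤ) (x : OK) : ℝ :=
  ((emb2 D (β (j+1)) - emb2 D (β j)) * emb1 D x +
    (emb1 D (β j) - emb1 D (β (j+1))) * emb2 D x) / deltaF D β j

def muF (D : ℕ) (β : ℤ → OK) (j : ℤ) (x : OK) : ℝ :=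
  (-(emb2 D (β j)) * emb1 D x + emb1 D (β j) * emb2 D x) / deltaF D β j

variable {D : ℕ} {β : ℤ → OK} {v : ℤ → ℤ}

lemma emb2_beta_eq (hβ : BetaSeq D β v) (k : ℤ) : emb2 D (β k) = emb1 D (β (-k)) := by
  rw [hβ.conj_eq k, emb1_conj]

lemma delta_neg (hβ : BetaSeq D β v) (j : ℤ) : deltaF D β j < 0 := by
  have h1 : emb1 D (β j) < emb1 D (β (j+1)) := hβ.mono (by omega)
  have h2 : emb2 D (β (j+1)) < emb2 D (β j) := by
    rw [emb2_beta_eq hβ, emb2_beta_eq hβ]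
    exact hβ.mono (by omega)
  have p1 : 0 < emb1 D (β j) := (hβ.indec j).1.1
  have p2 : 0 < emb2 D (β (j+1)) := (hβ.indec (j+1)).1.2
  have p3 : 0 < emb2 D (β j) := (hβ.indec j).1.2
  unfold deltaF
  nlinarith

lemma lamF_add (j : ℤ) (x y : OK) : lamF D β j (x + y) = lamF D β j x + lamF D β j y := by
  unfold lamF; rw [emb1_add, emb2_add]; ring

lemma muF_add (j : ℤ) (x y : OK) : muF D β j (x + y) = muF D β j x + muF D β j y := by
  unfold muF; rw [emb1_add, emb2_add]; ring

lemma lamF_zsmul (j : ℤ) (n : ℤ) (x : OK) : lamF D β j (n • x) = n * lamF D β j x := by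
  unfold lamF; rw [emb1_zsmul, emb2_zsmul]; ring

lemma muF_zsmul (j : ℤ) (n : ℤ) (x : OK) : muF D β j (n • x) = n * muF D β j x := by
  unfold muF; rw [emb1_zsmul, emb2_zsmul]; ring

lemma lamF_zero (j : ℤ) : lamF D β j 0 = 0 := by
  unfold lamF; rw [emb1_zero, emb2_zero]; ring

lemma muF_zero (j : ℤ) : muF D β j 0 = 0 := by
  unfold muF; rw [emb1_zero, emb2_zero]; ring

lemma lamF_msum (j : ℤ) (t : Multiset OK) :
    lamF D β j t.sum = (t.map (lamF D β j)).sum := by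
  induction t using Multiset.induction_on with
  | empty => simpa using lamF_zero (β := β) j
  | cons a t ih => simp [lamF_add, ih]

lemma muF_msum (j : ℤ) (t : Multiset OK) :
    muF D β j t.sum = (t.map (muF D β j)).sum := by
  induction t using Multiset.induction_on with
  | empty => simpa using muF_zero (β := β) j
  | cons a t ih => simp [muF_add, ih]

lemma lamF_j (hβ : BetaSeq D β v) (j : ℤ) : lamF D β j (β j) = 1 := by
  unfold lamF
  rw [div_eq_one_iff_eq (ne_of_lt (delta_neg hβ j))]
  unfold deltaF; ring

lemma lamF_j1 (hβ : BetaSeq D β v) (j : ℤ) : lamF D β j (β (j+1)) = 1 := by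
  unfold lamF
  rw [div_eq_one_iff_eq (ne_of_lt (delta_neg hβ j))]
  unfold deltaF; ring

lemma muF_j (hβ : BetaSeq D β v) (j : ℤ) : muF D β j (β j) = 0 := by
  unfold muF
  rw [div_eq_zero_iff]; left; ring

lemma muF_j1 (hβ : BetaSeq D β v) (j : ℤ) : muF D β j (β (j+1)) = 1 := by
  unfold muF
  rw [div_eq_one_iff_eq (ne_of_lt (delta_neg hβ j))]
  unfold deltaF; ring

lemma lamF_rec (hβ : BetaSeq D β v) (j : ℤ) (k : ℤ) :
    lamF D β j (β (k-1)) + lamF D β j (β (k+1)) = (v k : ℝ) * lamF D β j (β k) := by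
  have h : lamF D β j (v k • β k) = lamF D β j (β (k-1) + β (k+1)) := by rw [hβ.rel k]
  rw [lamF_zsmul, lamF_add] at h
  linarith

lemma muF_rec (hβ : BetaSeq D β v) (j : ℤ) (k : ℤ) :
    muF D β j (β (k-1)) + muF D β j (β (k+1)) = (v k : ℝ) * muF D β j (β k) := by
  have h : muF D β j (v k • β k) = muF D β j (β (k-1) + β (k+1)) := by rw [hβ.rel k]
  rw [muF_zsmul, muF_add] at h
  linarith

end Stmt14Aux
namespace Stmt14Aux

variable {D : ℕ} {β : ℤ → OK} {v : ℤ → ℤ}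

lemma perm213 {γ : Type*} (x y z : γ) : ({y, x, z} : Multiset γ) = {x, y, z} :=
  Multiset.cons_swap y x {z}

lemma perm132 {γ : Type*} (x y z : γ) : ({x, z, y} : Multiset γ) = {x, y, z} :=
  congrArg (Multiset.cons x) (Multiset.cons_swap z y 0)

lemma perm231 {γ : Type*} (x y z : γ) : ({y, z, x} : Multiset γ) = {x, y, z} := by
  rw [show ({y, z, x} : Multiset γ) = {y, x, z} from (perm132 y z x).symm, perm213]

lemma perm312 {γ : Type*} (x y z : γ) : ({z, x, y} : Multiset γ) = {x, y, z} := by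
  rw [show ({z, x, y} : Multiset γ) = {x, z, y} from perm213 x z y, perm132]

lemma perm321 {γ : Type*} (x y z : γ) : ({z, y, x} : Multiset γ) = {x, y, z} := by
  rw [show ({z, y, x} : Multiset γ) = {y, z, x} from perm213 y z x, perm231]

/-- The main classification of partitions of `3 β j` into indecomposables. -/
lemma classify (hβ : BetaSeq D β v) (j : ℤ)
    (s : Multiset OK) (hind : ∀ x ∈ s, Indec D x) (hsum : s.sum = (3:ℤ) • β j) :
    (4 ≤ v j → s = Multiset.replicate 3 (β j)) ∧
    (v j = 3 → (s = Multiset.replicate 3 (β j) ∨ s = {β (j-1), β (j+1)})) ∧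
    (v j = 2 → 3 ≤ v (j-1) → 3 ≤ v (j+1) →
      (s = Multiset.replicate 3 (β j) ∨ s = {β (j-1), β j, β (j+1)})) := by
  classical
  obtain ⟨K, hK⟩ := exists_index_multiset D hβ s hind
  have hv2 : ∀ k, (2:ℝ) ≤ (v k : ℝ) := fun k => by exact_mod_cast hβ.v_two_le k
  obtain ⟨Λ, M, hrecΛ, hrecM, hΛj, hΛj1, hMj, hMj1, hΛsum, hMsum⟩ :
      ∃ Λ M : ℤ → ℝ,
        (∀ k : ℤ, Λ (k-1) + Λ (k+1) = (v k : ℝ) * Λ k) ∧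
        (∀ k : ℤ, M (k-1) + M (k+1) = (v k : ℝ) * M k) ∧
        Λ j = 1 ∧ Λ (j+1) = 1 ∧ M j = 0 ∧ M (j+1) = 1 ∧
        (K.map Λ).sum = 3 ∧ (K.map M).sum = 0 := by
    refine ⟨fun k => lamF D β j (β k), fun k => muF D β j (β k),
      lamF_rec hβ j, muF_rec hβ j, lamF_j hβ j, lamF_j1 hβ j, muF_j hβ j, muF_j1 hβ j, ?_, ?_⟩
    · have h1 : (K.map (fun k => lamF D β j (β k))).sum = ((K.map β).map (lamF D β j)).sum := by
        rw [Multiset.map_map]; rfl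
      rw [h1, hK, ← lamF_msum, hsum, lamF_zsmul, lamF_j hβ j]
      norm_num
    · have h1 : (K.map (fun k => muF D β j (β k))).sum = ((K.map β).map (muF D β j)).sum := by
        rw [Multiset.map_map]; rfl
      rw [h1, hK, ← muF_msum, hsum, muF_zsmul, muF_j hβ j]
      norm_num
  -- derived values
  have hΛjm1 : Λ (j-1) = (v j : ℝ) - 1 := by
    have h := hrecΛ j; rw [hΛj, hΛj1] at h; linarith
  have hMjm1 : M (j-1) = -1 := by
    have h := hrecM j; rw [hMj, hMj1] at h; linarith
  have hΛjm2 : Λ (j-2) = (v (j-1) : ℝ) * ((v j:ℝ) - 1) - 1 := by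
    have h := hrecΛ (j-1)
    rw [show j - 1 - 1 = j - 2 from by ring, show j - 1 + 1 = j from by ring, hΛj, hΛjm1] at h
    linarith
  have hΛjp2 : Λ (j+2) = (v (j+1) : ℝ) - 1 := by
    have h := hrecΛ (j+1)
    rw [show j + 1 - 1 = j from by ring, show j + 1 + 1 = j + 2 from by ring, hΛj, hΛj1] at h
    linarith
  -- global lower bound for Λ, and chains
  have hΛchainR := seq_rightChain v Λ hv2 hrecΛ j 0 le_rfl (by rw [hΛj]; norm_num)
    (by rw [hΛj, hΛj1]; norm_num)
  have hΛchainL := seq_leftChain v Λ hv2 hrecΛ j 0 le_rfl (by rw [hΛj]; norm_num)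
    (by rw [hΛj, hΛjm1]; linarith [hv2 j])
  have hΛgeR : ∀ (c : ℕ) (k : ℤ), j + c ≤ k → Λ (j + c) ≤ Λ k := by
    intro c k hk
    have hn : k = j + ((k - j).toNat : ℤ) := by omega
    have hc : c ≤ (k - j).toNat := by omega
    have h := hΛchainR c (k - j).toNat hc
    rw [← hn] at h; linarith
  have hΛgeL : ∀ (c : ℕ) (k : ℤ), k ≤ j - c → Λ (j - c) ≤ Λ k := by
    intro c k hk
    have hn : k = j - ((j - k).toNat : ℤ) := by omega
    have hc : c ≤ (j - k).toNat := by omega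
    have h := hΛchainL c (j - k).toNat hc
    rw [← hn] at h; linarith
  have hΛone : ∀ k : ℤ, 1 ≤ Λ k := by
    intro k
    rcases le_or_gt j k with h | h
    · have := hΛgeR 0 k (by push_cast; omega)
      rw [show j + ((0:ℕ):ℤ) = j from by push_cast; ring, hΛj] at this
      exact this
    · have := hΛgeL 0 k (by push_cast; omega)
      rw [show j - ((0:ℕ):ℤ) = j from by push_cast; ring, hΛj] at this
      exact this
  -- M bounds
  have hMchainR := seq_rightChain v M hv2 hrecM j 1 zero_le_one (by rw [hMj])
    (by rw [hMj, hMj1]; norm_num)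
  have hMchainL := seq_leftChain v (fun k => -(M k)) hv2
    (fun k => by have := hrecM k; linarith) j 1 zero_le_one
    (by rw [hMj]; norm_num) (by rw [hMj, hMjm1]; norm_num)
  have hMge : ∀ k : ℤ, j ≤ k → ((k - j : ℤ) : ℝ) ≤ M k := by
    intro k hk
    have hn : k = j + ((k - j).toNat : ℤ) := by omega
    have h := hMchainR 0 (k - j).toNat (by omega)
    rw [← hn, show j + ((0:ℕ):ℤ) = j from by push_cast; ring, hMj] at h
    have e0 : ((k - j).toNat : ℤ) = k - j := Int.toNat_of_nonneg (by omega)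
    have e : (((k - j).toNat - 0 : ℕ) : ℝ) = ((k - j : ℤ) : ℝ) := by
      rw [Nat.sub_zero, ← e0]; norm_cast
    rw [e] at h; linarith
  have hMle : ∀ k : ℤ, k ≤ j → M k ≤ ((k - j : ℤ) : ℝ) := by
    intro k hk
    have hn : k = j - ((j - k).toNat : ℤ) := by omega
    have h := hMchainL 0 (j - k).toNat (by omega)
    rw [← hn, show j - ((0:ℕ):ℤ) = j from by push_cast; ring, hMj] at h
    have e0 : ((j - k).toNat : ℤ) = j - k := Int.toNat_of_nonneg (by omega)
    have e : (((j - k).toNat - 0 : ℕ) : ℝ) = -((k - j : ℤ) : ℝ) := by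
      rw [Nat.sub_zero, show (((j - k).toNat : ℕ) : ℝ) = ((j - k : ℤ) : ℝ) from by
        exact_mod_cast congrArg (fun z : ℤ => (z : ℝ)) e0]
      push_cast; ring
    rw [e] at h; linarith
  -- identification lemmas
  have hMzero : ∀ k : ℤ, M k = 0 → k = j := by
    intro k hk
    by_contra hne
    rcases lt_or_gt_of_ne hne with h | h
    · have h1 := hMle k (by omega)
      have h2 : ((k - j : ℤ) : ℝ) ≤ -1 := by exact_mod_cast (by omega : (k - j : ℤ) ≤ -1)
      linarith
    · have h1 := hMge k (by omega)
      have h2 : (1:ℝ) ≤ ((k - j : ℤ) : ℝ) := by exact_mod_cast (by omega : (1:ℤ) ≤ k - j)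
      linarith
  have hMone : ∀ k : ℤ, M k = 1 → k = j + 1 := by
    intro k hk
    by_contra hne
    rcases le_or_gt k j with h | h
    · have h1 := hMle k h
      have h2 : ((k - j : ℤ) : ℝ) ≤ 0 := by exact_mod_cast (by omega : (k - j : ℤ) ≤ 0)
      linarith
    · have h1 := hMge k (by omega)
      have h2 : (2:ℝ) ≤ ((k - j : ℤ) : ℝ) := by exact_mod_cast (by omega : (2:ℤ) ≤ k - j)
      linarith
  -- identities for index sets
  have hsingle : ∀ k : ℤ, β k ≠ (3:ℤ) • β j := by
    intro k hk
    have h := hβ.indec k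
    rw [hk] at h
    exact not_indec_three_smul (hβ.indec j).1 h
  -- generic: an element with Λ ≥ 3 - t forces cardinality bounds
  have hsum_rest : ∀ (k0 : ℤ) (K' : Multiset ℤ), K = k0 ::ₘ K' →
      Λ k0 + (K'.map Λ).sum = 3 := by
    intro k0 K' hKe
    rw [hKe, Multiset.map_cons, Multiset.sum_cons] at hΛsum
    exact hΛsum
  have hrest_ge : ∀ K' : Multiset ℤ, (Multiset.card K' : ℝ) ≤ (K'.map Λ).sum := by
    intro K'
    have h := Multiset.card_nsmul_le_sum (s := K'.map Λ) (a := (1:ℝ))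
      (by intro x hx; obtain ⟨l, hl, rfl⟩ := Multiset.mem_map.mp hx; exact hΛone l)
    simpa using h
  have hrest_zero : ∀ K' : Multiset ℤ, (K'.map Λ).sum ≤ 0 → K' = 0 := by
    intro K' h
    have := hrest_ge K'
    have : Multiset.card K' = 0 := by
      have h0 : (Multiset.card K' : ℝ) ≤ 0 := le_trans this h
      exact_mod_cast le_antisymm (by exact_mod_cast h0) (Nat.zero_le _)
    exact Multiset.card_eq_zero.mp this
  -- all indices ≥ j implies replicate
  have hright_repl : (∀ k ∈ K, j ≤ k) → s = Multiset.replicate 3 (β j) := by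
    intro hall
    have hallj : ∀ k ∈ K, k = j := by
      intro k hk
      apply hMzero
      obtain ⟨K', rfl⟩ := Multiset.exists_cons_of_mem hk
      have hsplit : M k + (K'.map M).sum = 0 := by
        rw [Multiset.map_cons, Multiset.sum_cons] at hMsum
        exact hMsum
      have h1 : (0:ℝ) ≤ M k := by
        have hjk : j ≤ k := hall k (Multiset.mem_cons_self _ _)
        have h2 := hMge k hjk
        have h3 : (0:ℝ) ≤ ((k - j : ℤ) : ℝ) := by
          exact_mod_cast (by omega : (0:ℤ) ≤ k - j)
        linarith
      have h2 : (0:ℝ) ≤ (K'.map M).sum := by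
        apply Multiset.sum_nonneg
        intro x hx
        obtain ⟨l, hl, rfl⟩ := Multiset.mem_map.mp hx
        have hjl : j ≤ l := hall l (Multiset.mem_cons_of_mem hl)
        have h3 := hMge l hjl
        have h4 : (0:ℝ) ≤ ((l - j : ℤ) : ℝ) := by
          exact_mod_cast (by omega : (0:ℤ) ≤ l - j)
        linarith
      linarith
    have hcard : Multiset.card K = 3 := by
      have h1 : (K.map Λ).sum = (Multiset.card K : ℝ) := by
        rw [Multiset.map_congr rfl (fun k hk => by rw [hallj k hk, hΛj])]
        simp [Multiset.map_const', Multiset.sum_replicate, nsmul_eq_mul]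
      rw [hΛsum] at h1
      exact_mod_cast h1.symm
    rw [← hK, show K = Multiset.replicate 3 j from
      Multiset.eq_replicate.mpr ⟨hcard, hallj⟩]
    simp [Multiset.map_replicate]
  refine ⟨?_, ?_, ?_⟩
  · -- case v j ≥ 4
    intro hvj
    apply hright_repl
    intro k hk
    by_contra hlt
    push_neg at hlt
    obtain ⟨K', rfl⟩ := Multiset.exists_cons_of_mem hk
    have h3 : (3:ℝ) ≤ Λ k := by
      have h := hΛgeL 1 k (by push_cast; omega)
      rw [show j - ((1:ℕ):ℤ) = j - 1 from by push_cast; ring, hΛjm1] at h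
      have h4 : (4:ℝ) ≤ (v j : ℝ) := by exact_mod_cast hvj
      linarith
    have hsp := hsum_rest k K' rfl
    have hK0 : K' = 0 := hrest_zero K' (by linarith)
    subst hK0
    exact absurd (show β k = (3:ℤ) • β j from by rw [← hsum, ← hK]; simp) (hsingle k)
  · -- case v j = 3
    intro hvj
    have hv3 : (v j : ℝ) = 3 := by rw [hvj]; norm_num
    by_cases hall : ∀ k ∈ K, j ≤ k
    · left; exact hright_repl hall
    · right
      push_neg at hall
      obtain ⟨k0, hk0K, hk0lt⟩ := hall
      obtain ⟨K', rfl⟩ := Multiset.exists_cons_of_mem hk0K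
      have hΛk0 : (2:ℝ) ≤ Λ k0 := by
        have h := hΛgeL 1 k0 (by push_cast; omega)
        rw [show j - ((1:ℕ):ℤ) = j - 1 from by push_cast; ring, hΛjm1] at h
        linarith
      have hsp := hsum_rest k0 K' rfl
      have hcard1 : Multiset.card K' ≤ 1 := by
        have h1 : (Multiset.card K' : ℝ) ≤ 1 := le_trans (hrest_ge K') (by linarith)
        exact_mod_cast h1
      have hne : K' ≠ 0 := by
        intro h0; subst h0
        exact absurd (show β k0 = (3:ℤ) • β j from by rw [← hsum, ← hK]; simp) (hsingle k0)
      have hcardeq : Multiset.card K' = 1 := by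
        have := Multiset.card_pos.mpr hne; omega
      obtain ⟨k1, rfl⟩ := Multiset.card_eq_one.mp hcardeq
      have hsp1 : Λ k0 + Λ k1 = 3 := by simpa using hsp
      have hΛk1 : Λ k1 = 1 := le_antisymm (by linarith) (hΛone k1)
      have hk0e : k0 = j - 1 := by
        by_contra hne2
        have hk2 : k0 ≤ j - 2 := by omega
        have h := hΛgeL 2 k0 (by push_cast; omega)
        rw [show j - ((2:ℕ):ℤ) = j - 2 from by push_cast; ring, hΛjm2, hv3] at h
        have hvm := hv2 (j-1)
        nlinarith
      subst hk0e
      have hMsp : M (j-1) + M k1 = 0 := by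
        rw [Multiset.map_cons, Multiset.map_singleton, Multiset.sum_cons,
          Multiset.sum_singleton] at hMsum
        exact hMsum
      have hk1e : k1 = j + 1 := hMone k1 (by rw [hMjm1] at hMsp; linarith)
      subst hk1e
      rw [← hK]
      simp
  · -- case v j = 2
    intro hvj hvl hvr
    have hv2e : (v j : ℝ) = 2 := by rw [hvj]; norm_num
    have hvlr : (3:ℝ) ≤ (v (j-1) : ℝ) := by exact_mod_cast hvl
    have hvrr : (3:ℝ) ≤ (v (j+1) : ℝ) := by exact_mod_cast hvr
    have hfar : ∀ k : ℤ, (k ≤ j - 2 ∨ j + 2 ≤ k) → (2:ℝ) ≤ Λ k := by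
      intro k hk
      rcases hk with hk | hk
      · have h := hΛgeL 2 k (by push_cast; omega)
        rw [show j - ((2:ℕ):ℤ) = j - 2 from by push_cast; ring, hΛjm2, hv2e] at h
        norm_num at h
        linarith
      · have h := hΛgeR 2 k (by push_cast; omega)
        rw [show j + ((2:ℕ):ℤ) = j + 2 from by push_cast; ring, hΛjp2] at h
        linarith
    have hnear : ∀ k ∈ K, j - 1 ≤ k ∧ k ≤ j + 1 := by
      intro k0 hk0
      by_contra hfar0
      have hk0far : k0 ≤ j - 2 ∨ j + 2 ≤ k0 := by omega
      obtain ⟨K', rfl⟩ := Multiset.exists_cons_of_mem hk0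
      have hΛk0 := hfar k0 hk0far
      have hsp := hsum_rest k0 K' rfl
      have hcard1 : Multiset.card K' ≤ 1 := by
        have h1 : (Multiset.card K' : ℝ) ≤ 1 := le_trans (hrest_ge K') (by linarith)
        exact_mod_cast h1
      have hne : K' ≠ 0 := by
        intro h0; subst h0
        exact absurd (show β k0 = (3:ℤ) • β j from by rw [← hsum, ← hK]; simp) (hsingle k0)
      have hcardeq : Multiset.card K' = 1 := by
        have := Multiset.card_pos.mpr hne; omega
      obtain ⟨k1, rfl⟩ := Multiset.card_eq_one.mp hcardeq
      have hsp1 : Λ k0 + Λ k1 = 3 := by simpa using hsp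
      have hΛk1 : Λ k1 = 1 := le_antisymm (by linarith) (hΛone k1)
      have hk1near : j - 1 ≤ k1 ∧ k1 ≤ j + 1 := by
        by_contra h
        have h2 : k1 ≤ j - 2 ∨ j + 2 ≤ k1 := by omega
        have := hfar k1 h2; linarith
      have hMsp : M k0 + M k1 = 0 := by
        rw [Multiset.map_cons, Multiset.map_singleton, Multiset.sum_cons,
          Multiset.sum_singleton] at hMsum
        exact hMsum
      have hMk1 : M k1 = -1 ∨ M k1 = 0 ∨ M k1 = 1 := by
        have h1 : k1 = j-1 ∨ k1 = j ∨ k1 = j+1 := by omega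
        rcases h1 with rfl | rfl | rfl
        · left; exact hMjm1
        · right; left; exact hMj
        · right; right; exact hMj1
      rcases hk0far with hk0f | hk0f
      · have h := hMle k0 (by omega)
        have h2 : ((k0 - j : ℤ) : ℝ) ≤ -2 := by
          exact_mod_cast (by omega : (k0 - j : ℤ) ≤ -2)
        rcases hMk1 with h3 | h3 | h3 <;> rw [h3] at hMsp <;> linarith
      · have h := hMge k0 (by omega)
        have h2 : (2:ℝ) ≤ ((k0 - j : ℤ) : ℝ) := by
          exact_mod_cast (by omega : (2:ℤ) ≤ k0 - j)
        rcases hMk1 with h3 | h3 | h3 <;> rw [h3] at hMsp <;> linarith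
    have hΛnear1 : ∀ k ∈ K, Λ k = 1 := by
      intro k hk
      obtain ⟨h1, h2⟩ := hnear k hk
      have h3 : k = j-1 ∨ k = j ∨ k = j+1 := by omega
      rcases h3 with rfl | rfl | rfl
      · rw [hΛjm1, hv2e]; norm_num
      · exact hΛj
      · exact hΛj1
    have hcard : Multiset.card K = 3 := by
      have h1 : (K.map Λ).sum = (Multiset.card K : ℝ) := by
        rw [Multiset.map_congr rfl hΛnear1]
        simp [Multiset.map_const', Multiset.sum_replicate, nsmul_eq_mul]
      rw [hΛsum] at h1
      exact_mod_cast h1.symm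
    obtain ⟨k1, k2, k3, hKe⟩ := Multiset.card_eq_three.mp hcard
    subst hKe
    have e1 : k1 = j-1 ∨ k1 = j ∨ k1 = j+1 := by
      have := hnear k1 (by simp); omega
    have e2 : k2 = j-1 ∨ k2 = j ∨ k2 = j+1 := by
      have := hnear k2 (by simp); omega
    have e3 : k3 = j-1 ∨ k3 = j ∨ k3 = j+1 := by
      have := hnear k3 (by simp); omega
    simp only [Multiset.insert_eq_cons, Multiset.map_cons, Multiset.map_singleton,
      Multiset.sum_cons, Multiset.sum_singleton] at hMsum
    rcases e1 with rfl | rfl | rfl <;> rcases e2 with rfl | rfl | rfl <;>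
      rcases e3 with rfl | rfl | rfl <;>
      first
        | (exfalso; norm_num [hMjm1, hMj, hMj1] at hMsum; done)
        | (left; rw [← hK]
           simp only [Multiset.insert_eq_cons, Multiset.map_cons, Multiset.map_singleton]
           simp [Multiset.replicate_succ]; done)
        | (right; rw [← hK]
           simp only [Multiset.insert_eq_cons, Multiset.map_cons, Multiset.map_singleton]
           first
             | done
             | rfl
             | exact perm213 _ _ _
             | exact perm132 _ _ _
             | exact perm231 _ _ _
             | exact perm312 _ _ _
             | exact perm321 _ _ _)

end Stmt14Aux
open Stmt14Aux in
/-- the number of partitions of `3β_j`. -/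
theorem stmt14 (D : ℕ) (hD : 2 ≤ D) (hsq : Squarefree D)
    (β : ℤ → OK) (v : ℤ → ℤ) (hβ : BetaSeq D β v)
    (j : ℤ) (α : OK) (hα : α = (3 : ℤ) • β j) :
    (4 ≤ v j → pK D α = 3) ∧
    (v j = 3 → pK D α = 4) ∧
    (v j = 2 → 2 < v (j - 1) → 2 < v (j + 1) → pK D α = 6) ∧
    (v j = 2 → (v (j - 1) = 2 ∨ v (j + 1) = 2) → 8 ≤ pK D α) := by
  classical
  subst hα
  have hTP : ∀ k : ℤ, TotPos D (β k) := fun k => (hβ.indec k).1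
  have hfpos : ∀ k : ℤ, 0 < emb1 D (β k) := fun k => (hTP k).1
  have hflt : ∀ {k l : ℤ}, k < l → emb1 D (β k) < emb1 D (β l) := fun h => hβ.mono h
  have hbne : ∀ {k l : ℤ}, k < l → β k ≠ β l :=
    fun h => fun e => absurd (congrArg (emb1 D) e) (ne_of_lt (hflt h))
  have h3x : (3:ℤ) • β j = β j + β j + β j := by
    rw [show (3:ℤ) = 1 + 1 + 1 from rfl, add_smul, add_smul, one_smul]
  have hSdef : pK D ((3:ℤ) • β j) =
      Set.ncard {s : Multiset OK | (∀ x ∈ s, TotPos D x) ∧ s.sum = (3:ℤ) • β j} := rfl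
  -- refinement machinery
  have hrefine : ∀ s' : Multiset OK, (∀ y ∈ s', TotPos D y) → s'.sum = (3:ℤ) • β j →
      ∃ R : Multiset OK, (∀ y ∈ R, Indec D y) ∧ R.sum = (3:ℤ) • β j ∧
        ∃ t : Multiset (Multiset OK), (∀ u ∈ t, u ≠ 0) ∧ t.join = R ∧
          t.map Multiset.sum = s' := by
    intro s' h1 h2
    obtain ⟨t, ht, hts⟩ := exists_refinement D s' h1
    refine ⟨t.join, ?_, ?_, t, fun u hu => (ht u hu).1, rfl, hts⟩
    · intro y hy
      obtain ⟨u, hu, hyu⟩ := Multiset.mem_join.mp hy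
      exact (ht u hu).2 y hyu
    · rw [Multiset.sum_join, hts]
      exact h2
  -- frequently used elements
  have hTPxx : TotPos D (β j + β j) := TotPos.add (hTP j) (hTP j)
  have hTPxxx : TotPos D (β j + β j + β j) := TotPos.add hTPxx (hTP j)
  -- membership of the three "replicate-type" partitions
  have hmem1 : (∀ y ∈ ({β j + β j + β j} : Multiset OK), TotPos D y) ∧
      ({β j + β j + β j} : Multiset OK).sum = (3:ℤ) • β j := by
    constructor
    · intro y hy; rw [Multiset.mem_singleton] at hy; subst hy; exact hTPxxx
    · rw [Multiset.sum_singleton, h3x]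
  have hmem2 : (∀ y ∈ ({β j + β j, β j} : Multiset OK), TotPos D y) ∧
      ({β j + β j, β j} : Multiset OK).sum = (3:ℤ) • β j := by
    constructor
    · intro y hy
      rcases Multiset.mem_cons.mp hy with rfl | hy
      · exact hTPxx
      · rw [Multiset.mem_singleton] at hy; subst hy; exact hTP j
    · rw [show ({β j + β j, β j} : Multiset OK).sum = β j + β j + β j from by
        simp [Multiset.sum_cons], h3x]
  have hmem3 : (∀ y ∈ ({β j, β j, β j} : Multiset OK), TotPos D y) ∧
      ({β j, β j, β j} : Multiset OK).sum = (3:ℤ) • β j := by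
    constructor
    · intro y hy
      rcases Multiset.mem_cons.mp hy with rfl | hy
      · exact hTP j
      · rcases Multiset.mem_cons.mp hy with rfl | hy
        · exact hTP j
        · rw [Multiset.mem_singleton] at hy; subst hy; exact hTP j
    · rw [show ({β j, β j, β j} : Multiset OK).sum = β j + β j + β j from by
        simp [Multiset.sum_cons, add_assoc], h3x]
  -- replicate conversions
  have hrep : Multiset.replicate 3 (β j) = ({β j, β j, β j} : Multiset OK) := by
    simp [Multiset.replicate_succ]
  refine ⟨?_, ?_, ?_, ?_⟩
  · -- case v j ≥ 4 : answer 3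
    intro hv4
    rw [hSdef]
    have hSeq : {s : Multiset OK | (∀ x ∈ s, TotPos D x) ∧ s.sum = (3:ℤ) • β j} =
        {({β j + β j + β j} : Multiset OK), {β j + β j, β j}, {β j, β j, β j}} := by
      ext s
      simp only [Set.mem_setOf_eq, Set.mem_insert_iff, Set.mem_singleton_iff]
      constructor
      · rintro ⟨hpos, hsum⟩
        obtain ⟨R, hRind, hRsum, t, ht0, htj, hts⟩ := hrefine s hpos hsum
        have hR := ((classify hβ j R hRind hRsum).1 hv4)
        rw [hR, hrep] at htj
        have := grouping_replicate (β j) t ht0 (by rw [htj, hrep])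
        rw [hts] at this
        tauto
      · rintro (rfl | rfl | rfl)
        · exact hmem1
        · exact hmem2
        · exact hmem3
    rw [hSeq]
    have d12 : ({β j + β j + β j} : Multiset OK) ≠ {β j + β j, β j} := card_ne (by simp)
    have d13 : ({β j + β j + β j} : Multiset OK) ≠ {β j, β j, β j} := card_ne (by simp)
    have d23 : ({β j + β j, β j} : Multiset OK) ≠ {β j, β j, β j} := card_ne (by simp)
    rw [Set.ncard_insert_of_notMem (by simp [d12, d13])
      ((Set.finite_singleton _).insert _), Set.ncard_pair d23]
  · -- case v j = 3 : answer 4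
    intro hv3
    have hrel : (3:ℤ) • β j = β (j-1) + β (j+1) := by
      have h := hβ.rel j; rw [hv3] at h; exact h
    have h5 : β (j-1) + β (j+1) = β j + β j + β j := by rw [← h3x]; exact hrel.symm
    have hfa : emb1 D (β (j-1)) < emb1 D (β j) := hflt (by omega)
    have hfc : emb1 D (β j) < emb1 D (β (j+1)) := hflt (by omega)
    have haxx : β (j-1) ≠ β j + β j := by
      intro e
      have h2 := congrArg (emb1 D) e
      rw [emb1_add] at h2
      linarith [hfpos j]
    have hax : β (j-1) ≠ β j := hbne (by omega)
    have hmemD : (∀ y ∈ ({β (j-1), β (j+1)} : Multiset OK), TotPos D y) ∧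
        ({β (j-1), β (j+1)} : Multiset OK).sum = (3:ℤ) • β j := by
      constructor
      · intro y hy
        rcases Multiset.mem_cons.mp hy with rfl | hy
        · exact hTP _
        · rw [Multiset.mem_singleton] at hy; subst hy; exact hTP _
      · simp only [Multiset.insert_eq_cons, Multiset.sum_cons, Multiset.sum_singleton]
        exact hrel.symm
    rw [hSdef]
    have hSeq : {s : Multiset OK | (∀ x ∈ s, TotPos D x) ∧ s.sum = (3:ℤ) • β j} =
        {({β j + β j + β j} : Multiset OK), {β j + β j, β j}, {β j, β j, β j},
          {β (j-1), β (j+1)}} := by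
      ext s
      simp only [Set.mem_setOf_eq, Set.mem_insert_iff, Set.mem_singleton_iff]
      constructor
      · rintro ⟨hpos, hsum⟩
        obtain ⟨R, hRind, hRsum, t, ht0, htj, hts⟩ := hrefine s hpos hsum
        rcases ((classify hβ j R hRind hRsum).2.1 hv3) with hR | hR
        · rw [hR, hrep] at htj
          have := grouping_replicate (β j) t ht0 (by rw [htj, hrep])
          rw [hts] at this
          tauto
        · rw [hR] at htj
          rcases grouping_pair (β (j-1)) (β (j+1)) t ht0 htj with h | h
          · rw [hts] at h
            left; rw [h, h5]
          · rw [hts] at h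
            right; right; right; exact h
      · rintro (rfl | rfl | rfl | rfl)
        · exact hmem1
        · exact hmem2
        · exact hmem3
        · exact hmemD
    rw [hSeq]
    have d12 : ({β j + β j + β j} : Multiset OK) ≠ {β j + β j, β j} := card_ne (by simp)
    have d13 : ({β j + β j + β j} : Multiset OK) ≠ {β j, β j, β j} := card_ne (by simp)
    have d14 : ({β j + β j + β j} : Multiset OK) ≠ {β (j-1), β (j+1)} := card_ne (by simp)
    have d23 : ({β j + β j, β j} : Multiset OK) ≠ {β j, β j, β j} := card_ne (by simp)
    have d24 : ({β j + β j, β j} : Multiset OK) ≠ {β (j-1), β (j+1)} := by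
      refine (ne_of_mem_not_mem (show β (j-1) ∈ ({β (j-1), β (j+1)} : Multiset OK) from by simp)
        ?_).symm
      simp only [Multiset.insert_eq_cons, Multiset.mem_cons, Multiset.mem_singleton]
      push_neg
      exact ⟨haxx, hax⟩
    have d34 : ({β j, β j, β j} : Multiset OK) ≠ {β (j-1), β (j+1)} := card_ne (by simp)
    rw [Set.ncard_insert_of_notMem (by
        simp only [Set.mem_insert_iff, Set.mem_singleton_iff]; push_neg
        exact ⟨d12, d13, d14⟩) ((Set.finite_singleton _).insert _ |>.insert _),
      Set.ncard_insert_of_notMem (by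
        simp only [Set.mem_insert_iff, Set.mem_singleton_iff]; push_neg
        exact ⟨d23, d24⟩) ((Set.finite_singleton _).insert _),
      Set.ncard_pair d34]
  · -- case v j = 2, neighbours > 2 : answer 6
    intro hv2 hvl hvr
    have hrel : (2:ℤ) • β j = β (j-1) + β (j+1) := by
      have h := hβ.rel j; rw [hv2] at h; exact h
    have h2r : β (j-1) + β (j+1) = β j + β j := by rw [← two_zsmul]; exact hrel.symm
    have hfa : emb1 D (β (j-1)) < emb1 D (β j) := hflt (by omega)
    have hfc : emb1 D (β j) < emb1 D (β (j+1)) := hflt (by omega)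
    have hfsum : emb1 D (β (j-1)) + emb1 D (β (j+1)) = emb1 D (β j) + emb1 D (β j) := by
      have h := congrArg (emb1 D) h2r
      rwa [emb1_add, emb1_add] at h
    have hax : β (j-1) ≠ β j := hbne (by omega)
    have hac : β (j-1) ≠ β (j+1) := hbne (by omega)
    have hxc : β j ≠ β (j+1) := hbne (by omega)
    have haxx : β (j-1) ≠ β j + β j := by
      intro e
      have h2 := congrArg (emb1 D) e
      rw [emb1_add] at h2
      linarith [hfpos j]
    have hcx : β (j+1) ≠ β j := fun e => hxc e.symm
    have hcxx : β (j+1) ≠ β j + β j := by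
      intro e
      have h2 := congrArg (emb1 D) e
      rw [emb1_add] at h2
      linarith [hfpos (j-1)]
    have haax : β (j-1) ≠ β (j-1) + β j := by
      intro e
      have h2 := congrArg (emb1 D) e
      rw [emb1_add] at h2
      linarith [hfpos j]
    -- explicit partitions
    have hmemP4 : (∀ y ∈ ({β (j-1), β j, β (j+1)} : Multiset OK), TotPos D y) ∧
        ({β (j-1), β j, β (j+1)} : Multiset OK).sum = (3:ℤ) • β j := by
      constructor
      · intro y hy
        simp only [Multiset.insert_eq_cons, Multiset.mem_cons, Multiset.mem_singleton] at hy
        rcases hy with rfl | rfl | rfl <;> exact hTP _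
      · simp only [Multiset.insert_eq_cons, Multiset.sum_cons, Multiset.sum_singleton]
        rw [h3x]; linear_combination h2r
    have hmemP5 : (∀ y ∈ ({β (j-1) + β j, β (j+1)} : Multiset OK), TotPos D y) ∧
        ({β (j-1) + β j, β (j+1)} : Multiset OK).sum = (3:ℤ) • β j := by
      constructor
      · intro y hy
        simp only [Multiset.insert_eq_cons, Multiset.mem_cons, Multiset.mem_singleton] at hy
        rcases hy with rfl | rfl
        · exact TotPos.add (hTP _) (hTP _)
        · exact hTP _
      · simp only [Multiset.insert_eq_cons, Multiset.sum_cons, Multiset.sum_singleton]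
        rw [h3x]; linear_combination h2r
    have hmemP6 : (∀ y ∈ ({β j + β (j+1), β (j-1)} : Multiset OK), TotPos D y) ∧
        ({β j + β (j+1), β (j-1)} : Multiset OK).sum = (3:ℤ) • β j := by
      constructor
      · intro y hy
        simp only [Multiset.insert_eq_cons, Multiset.mem_cons, Multiset.mem_singleton] at hy
        rcases hy with rfl | rfl
        · exact TotPos.add (hTP _) (hTP _)
        · exact hTP _
      · simp only [Multiset.insert_eq_cons, Multiset.sum_cons, Multiset.sum_singleton]
        rw [h3x]; linear_combination h2r
    rw [hSdef]
    have hSeq : {s : Multiset OK | (∀ x ∈ s, TotPos D x) ∧ s.sum = (3:ℤ) • β j} =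
        {({β j + β j + β j} : Multiset OK), {β j + β j, β j}, {β j, β j, β j},
          {β (j-1), β j, β (j+1)}, {β (j-1) + β j, β (j+1)}, {β j + β (j+1), β (j-1)}} := by
      ext s
      simp only [Set.mem_setOf_eq, Set.mem_insert_iff, Set.mem_singleton_iff]
      constructor
      · rintro ⟨hpos, hsum⟩
        obtain ⟨R, hRind, hRsum, t, ht0, htj, hts⟩ := hrefine s hpos hsum
        rcases ((classify hβ j R hRind hRsum).2.2 hv2 (by omega) (by omega)) with hR | hR
        · rw [hR, hrep] at htj
          have := grouping_replicate (β j) t ht0 (by rw [htj, hrep])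
          rw [hts] at this
          tauto
        · rw [hR] at htj
          rcases grouping_three (β (j-1)) (β j) (β (j+1)) hax hac hxc t ht0 htj with
            h | h | h | h | h <;> rw [hts] at h
          · left
            rw [h]
            congr 1
            linear_combination h2r
          · right; right; right; right; right
            rw [h]
            exact Multiset.cons_swap _ _ _
          · right; left
            rw [h, show β (j-1) + β (j+1) = β j + β j from h2r]
            exact Multiset.cons_swap _ _ _
          · right; right; right; right; left
            rw [h]
            exact Multiset.cons_swap _ _ _
          · right; right; right; left; exact h
      · rintro (rfl | rfl | rfl | rfl | rfl | rfl)
        · exact hmem1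
        · exact hmem2
        · exact hmem3
        · exact hmemP4
        · exact hmemP5
        · exact hmemP6
    rw [hSeq]
    -- distinctness
    have d12 : ({β j + β j + β j} : Multiset OK) ≠ {β j + β j, β j} := card_ne (by simp)
    have d13 : ({β j + β j + β j} : Multiset OK) ≠ {β j, β j, β j} := card_ne (by simp)
    have d14 : ({β j + β j + β j} : Multiset OK) ≠ {β (j-1), β j, β (j+1)} := card_ne (by simp)
    have d15 : ({β j + β j + β j} : Multiset OK) ≠ {β (j-1) + β j, β (j+1)} := card_ne (by simp)
    have d16 : ({β j + β j + β j} : Multiset OK) ≠ {β j + β (j+1), β (j-1)} := card_ne (by simp)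
    have d23 : ({β j + β j, β j} : Multiset OK) ≠ {β j, β j, β j} := card_ne (by simp)
    have d24 : ({β j + β j, β j} : Multiset OK) ≠ {β (j-1), β j, β (j+1)} := card_ne (by simp)
    have d25 : ({β j + β j, β j} : Multiset OK) ≠ {β (j-1) + β j, β (j+1)} := by
      refine (ne_of_mem_not_mem
        (show β (j+1) ∈ ({β (j-1) + β j, β (j+1)} : Multiset OK) from by simp) ?_).symm
      simp only [Multiset.insert_eq_cons, Multiset.mem_cons, Multiset.mem_singleton]
      push_neg
      exact ⟨hcxx, hcx⟩
    have d26 : ({β j + β j, β j} : Multiset OK) ≠ {β j + β (j+1), β (j-1)} := by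
      refine (ne_of_mem_not_mem
        (show β (j-1) ∈ ({β j + β (j+1), β (j-1)} : Multiset OK) from by simp) ?_).symm
      simp only [Multiset.insert_eq_cons, Multiset.mem_cons, Multiset.mem_singleton]
      push_neg
      refine ⟨?_, hax⟩
      intro e
      have h2 := congrArg (emb1 D) e
      rw [emb1_add] at h2
      linarith [hfpos (j+1), hfpos j]
    have d34 : ({β j, β j, β j} : Multiset OK) ≠ {β (j-1), β j, β (j+1)} := by
      refine (ne_of_mem_not_mem
        (show β (j-1) ∈ ({β (j-1), β j, β (j+1)} : Multiset OK) from by simp) ?_).symm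
      simp only [Multiset.insert_eq_cons, Multiset.mem_cons, Multiset.mem_singleton]
      push_neg
      exact ⟨hax, hax, hax⟩
    have d35 : ({β j, β j, β j} : Multiset OK) ≠ {β (j-1) + β j, β (j+1)} := card_ne (by simp)
    have d36 : ({β j, β j, β j} : Multiset OK) ≠ {β j + β (j+1), β (j-1)} := card_ne (by simp)
    have d45 : ({β (j-1), β j, β (j+1)} : Multiset OK) ≠ {β (j-1) + β j, β (j+1)} :=
      card_ne (by simp)
    have d46 : ({β (j-1), β j, β (j+1)} : Multiset OK) ≠ {β j + β (j+1), β (j-1)} :=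
      card_ne (by simp)
    have d56 : ({β (j-1) + β j, β (j+1)} : Multiset OK) ≠ {β j + β (j+1), β (j-1)} := by
      refine (ne_of_mem_not_mem
        (show β (j-1) ∈ ({β j + β (j+1), β (j-1)} : Multiset OK) from by simp) ?_).symm
      simp only [Multiset.insert_eq_cons, Multiset.mem_cons, Multiset.mem_singleton]
      push_neg
      refine ⟨?_, hac⟩
      intro e
      have h2 := congrArg (emb1 D) e
      rw [emb1_add] at h2
      linarith [hfpos j]
    rw [Set.ncard_insert_of_notMem (by
        simp only [Set.mem_insert_iff, Set.mem_singleton_iff]; push_neg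
        exact ⟨d12, d13, d14, d15, d16⟩)
        (((((Set.finite_singleton _).insert _).insert _).insert _).insert _),
      Set.ncard_insert_of_notMem (by
        simp only [Set.mem_insert_iff, Set.mem_singleton_iff]; push_neg
        exact ⟨d23, d24, d25, d26⟩) ((((Set.finite_singleton _).insert _).insert _).insert _),
      Set.ncard_insert_of_notMem (by
        simp only [Set.mem_insert_iff, Set.mem_singleton_iff]; push_neg
        exact ⟨d34, d35, d36⟩) (((Set.finite_singleton _).insert _).insert _),
      Set.ncard_insert_of_notMem (by
        simp only [Set.mem_insert_iff, Set.mem_singleton_iff]; push_neg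
        exact ⟨d45, d46⟩) ((Set.finite_singleton _).insert _),
      Set.ncard_pair d56]
  · -- case v j = 2, a neighbour = 2 : at least 8
    intro hv2 hor
    have hrel : (2:ℤ) • β j = β (j-1) + β (j+1) := by
      have h := hβ.rel j; rw [hv2] at h; exact h
    have h2r : β (j-1) + β (j+1) = β j + β j := by rw [← two_zsmul]; exact hrel.symm
    have hfa : emb1 D (β (j-1)) < emb1 D (β j) := hflt (by omega)
    have hfc : emb1 D (β j) < emb1 D (β (j+1)) := hflt (by omega)
    have hax : β (j-1) ≠ β j := hbne (by omega)
    have hac : β (j-1) ≠ β (j+1) := hbne (by omega)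
    have hxc : β j ≠ β (j+1) := hbne (by omega)
    have hcx : β (j+1) ≠ β j := fun e => hxc e.symm
    have haxx : β (j-1) ≠ β j + β j := by
      intro e
      have h2 := congrArg (emb1 D) e
      rw [emb1_add] at h2
      linarith [hfpos j]
    have hcxx : β (j+1) ≠ β j + β j := by
      intro e
      have h2 := congrArg (emb1 D) e
      rw [emb1_add] at h2
      have h := congrArg (emb1 D) h2r
      rw [emb1_add, emb1_add] at h
      linarith [hfpos (j-1)]
    have hmemP4 : (∀ y ∈ ({β (j-1), β j, β (j+1)} : Multiset OK), TotPos D y) ∧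
        ({β (j-1), β j, β (j+1)} : Multiset OK).sum = (3:ℤ) • β j := by
      constructor
      · intro y hy
        simp only [Multiset.insert_eq_cons, Multiset.mem_cons, Multiset.mem_singleton] at hy
        rcases hy with rfl | rfl | rfl <;> exact hTP _
      · simp only [Multiset.insert_eq_cons, Multiset.sum_cons, Multiset.sum_singleton]
        rw [h3x]; linear_combination h2r
    have hmemP5 : (∀ y ∈ ({β (j-1) + β j, β (j+1)} : Multiset OK), TotPos D y) ∧
        ({β (j-1) + β j, β (j+1)} : Multiset OK).sum = (3:ℤ) • β j := by
      constructor
      · intro y hy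
        simp only [Multiset.insert_eq_cons, Multiset.mem_cons, Multiset.mem_singleton] at hy
        rcases hy with rfl | rfl
        · exact TotPos.add (hTP _) (hTP _)
        · exact hTP _
      · simp only [Multiset.insert_eq_cons, Multiset.sum_cons, Multiset.sum_singleton]
        rw [h3x]; linear_combination h2r
    have hmemP6 : (∀ y ∈ ({β j + β (j+1), β (j-1)} : Multiset OK), TotPos D y) ∧
        ({β j + β (j+1), β (j-1)} : Multiset OK).sum = (3:ℤ) • β j := by
      constructor
      · intro y hy
        simp only [Multiset.insert_eq_cons, Multiset.mem_cons, Multiset.mem_singleton] at hy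
        rcases hy with rfl | rfl
        · exact TotPos.add (hTP _) (hTP _)
        · exact hTP _
      · simp only [Multiset.insert_eq_cons, Multiset.sum_cons, Multiset.sum_singleton]
        rw [h3x]; linear_combination h2r
    have hfin := part_finite D hD ((3:ℤ) • β j)
    -- common distinctness facts among the first six partitions
    have d12 : ({β j + β j + β j} : Multiset OK) ≠ {β j + β j, β j} := card_ne (by simp)
    have d13 : ({β j + β j + β j} : Multiset OK) ≠ {β j, β j, β j} := card_ne (by simp)
    have d14 : ({β j + β j + β j} : Multiset OK) ≠ {β (j-1), β j, β (j+1)} := card_ne (by simp)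
    have d15 : ({β j + β j + β j} : Multiset OK) ≠ {β (j-1) + β j, β (j+1)} := card_ne (by simp)
    have d16 : ({β j + β j + β j} : Multiset OK) ≠ {β j + β (j+1), β (j-1)} := card_ne (by simp)
    have d23 : ({β j + β j, β j} : Multiset OK) ≠ {β j, β j, β j} := card_ne (by simp)
    have d24 : ({β j + β j, β j} : Multiset OK) ≠ {β (j-1), β j, β (j+1)} := card_ne (by simp)
    have d25 : ({β j + β j, β j} : Multiset OK) ≠ {β (j-1) + β j, β (j+1)} := by
      refine (ne_of_mem_not_mem
        (show β (j+1) ∈ ({β (j-1) + β j, β (j+1)} : Multiset OK) from by simp) ?_).symm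
      simp only [Multiset.insert_eq_cons, Multiset.mem_cons, Multiset.mem_singleton]
      push_neg
      exact ⟨hcxx, hcx⟩
    have d26 : ({β j + β j, β j} : Multiset OK) ≠ {β j + β (j+1), β (j-1)} := by
      refine (ne_of_mem_not_mem
        (show β (j-1) ∈ ({β j + β (j+1), β (j-1)} : Multiset OK) from by simp) ?_).symm
      simp only [Multiset.insert_eq_cons, Multiset.mem_cons, Multiset.mem_singleton]
      push_neg
      refine ⟨?_, hax⟩
      intro e
      have h2 := congrArg (emb1 D) e
      rw [emb1_add] at h2
      linarith [hfpos (j+1), hfpos j]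
    have d34 : ({β j, β j, β j} : Multiset OK) ≠ {β (j-1), β j, β (j+1)} := by
      refine (ne_of_mem_not_mem
        (show β (j-1) ∈ ({β (j-1), β j, β (j+1)} : Multiset OK) from by simp) ?_).symm
      simp only [Multiset.insert_eq_cons, Multiset.mem_cons, Multiset.mem_singleton]
      push_neg
      exact ⟨hax, hax, hax⟩
    have d35 : ({β j, β j, β j} : Multiset OK) ≠ {β (j-1) + β j, β (j+1)} := card_ne (by simp)
    have d36 : ({β j, β j, β j} : Multiset OK) ≠ {β j + β (j+1), β (j-1)} := card_ne (by simp)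
    have d45 : ({β (j-1), β j, β (j+1)} : Multiset OK) ≠ {β (j-1) + β j, β (j+1)} :=
      card_ne (by simp)
    have d46 : ({β (j-1), β j, β (j+1)} : Multiset OK) ≠ {β j + β (j+1), β (j-1)} :=
      card_ne (by simp)
    have d56 : ({β (j-1) + β j, β (j+1)} : Multiset OK) ≠ {β j + β (j+1), β (j-1)} := by
      refine (ne_of_mem_not_mem
        (show β (j-1) ∈ ({β j + β (j+1), β (j-1)} : Multiset OK) from by simp) ?_).symm
      simp only [Multiset.insert_eq_cons, Multiset.mem_cons, Multiset.mem_singleton]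
      push_neg
      refine ⟨?_, hac⟩
      intro e
      have h2 := congrArg (emb1 D) e
      rw [emb1_add] at h2
      linarith [hfpos j]
    rw [hSdef]
    rcases hor with hvl2 | hvr2
    · -- v (j-1) = 2 : extra partitions {β(j+1)+β(j+1), β(j-2)} and {β(j+1), β(j+1), β(j-2)}
      have hrel2 : (2:ℤ) • β (j-1) = β (j-2) + β j := by
        have h := hβ.rel (j-1)
        rw [hvl2, show j - 1 - 1 = j - 2 from by ring, show j - 1 + 1 = j from by ring] at h
        exact h
      have h5r : β (j-2) + β j = β (j-1) + β (j-1) := by rw [← two_zsmul]; exact hrel2.symm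
      have hfe : emb1 D (β (j-2)) < emb1 D (β (j-1)) := hflt (by omega)
      have hex : β (j-2) ≠ β j := hbne (by omega)
      have hea : β (j-2) ≠ β (j-1) := hbne (by omega)
      have hec : β (j-2) ≠ β (j+1) := hbne (by omega)
      have hmemP7 : (∀ y ∈ ({β (j+1) + β (j+1), β (j-2)} : Multiset OK), TotPos D y) ∧
          ({β (j+1) + β (j+1), β (j-2)} : Multiset OK).sum = (3:ℤ) • β j := by
        constructor
        · intro y hy
          simp only [Multiset.insert_eq_cons, Multiset.mem_cons, Multiset.mem_singleton] at hy
          rcases hy with rfl | rfl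
          · exact TotPos.add (hTP _) (hTP _)
          · exact hTP _
        · simp only [Multiset.insert_eq_cons, Multiset.sum_cons, Multiset.sum_singleton]
          rw [h3x]; linear_combination 2 * h2r + h5r
      have hmemP8 : (∀ y ∈ ({β (j+1), β (j+1), β (j-2)} : Multiset OK), TotPos D y) ∧
          ({β (j+1), β (j+1), β (j-2)} : Multiset OK).sum = (3:ℤ) • β j := by
        constructor
        · intro y hy
          simp only [Multiset.insert_eq_cons, Multiset.mem_cons, Multiset.mem_singleton] at hy
          rcases hy with rfl | rfl | rfl <;> exact hTP _
        · simp only [Multiset.insert_eq_cons, Multiset.sum_cons, Multiset.sum_singleton]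
          rw [h3x]; linear_combination 2 * h2r + h5r
      -- distinctness with the new partitions
      have d17 : ({β j + β j + β j} : Multiset OK) ≠ {β (j+1) + β (j+1), β (j-2)} :=
        card_ne (by simp)
      have d18 : ({β j + β j + β j} : Multiset OK) ≠ {β (j+1), β (j+1), β (j-2)} :=
        card_ne (by simp)
      have d27 : ({β j + β j, β j} : Multiset OK) ≠ {β (j+1) + β (j+1), β (j-2)} := by
        intro h
        rcases pair_eq h with ⟨h1, h2⟩ | ⟨h1, h2⟩
        · exact hex (h2.symm)
        · have h3 := congrArg (emb1 D) h1
          rw [emb1_add] at h3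
          have h4 := congrArg (emb1 D) h2
          rw [emb1_add] at h4
          linarith [hfpos j, hfpos (j+1)]
      have d28 : ({β j + β j, β j} : Multiset OK) ≠ {β (j+1), β (j+1), β (j-2)} :=
        card_ne (by simp)
      have d37 : ({β j, β j, β j} : Multiset OK) ≠ {β (j+1) + β (j+1), β (j-2)} :=
        card_ne (by simp)
      have d38 : ({β j, β j, β j} : Multiset OK) ≠ {β (j+1), β (j+1), β (j-2)} := by
        refine (ne_of_mem_not_mem
          (show β (j-2) ∈ ({β (j+1), β (j+1), β (j-2)} : Multiset OK) from by simp) ?_).symm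
        simp only [Multiset.insert_eq_cons, Multiset.mem_cons, Multiset.mem_singleton]
        push_neg
        exact ⟨hex, hex, hex⟩
      have d47 : ({β (j-1), β j, β (j+1)} : Multiset OK) ≠ {β (j+1) + β (j+1), β (j-2)} :=
        card_ne (by simp)
      have d48 : ({β (j-1), β j, β (j+1)} : Multiset OK) ≠ {β (j+1), β (j+1), β (j-2)} := by
        refine (ne_of_mem_not_mem
          (show β (j-2) ∈ ({β (j+1), β (j+1), β (j-2)} : Multiset OK) from by simp) ?_).symm
        simp only [Multiset.insert_eq_cons, Multiset.mem_cons, Multiset.mem_singleton]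
        push_neg
        exact ⟨hea, hex, hec⟩
      have d57 : ({β (j-1) + β j, β (j+1)} : Multiset OK) ≠ {β (j+1) + β (j+1), β (j-2)} := by
        intro h
        rcases pair_eq h with ⟨h1, h2⟩ | ⟨h1, h2⟩
        · exact hec h2.symm
        · have h3 := congrArg (emb1 D) h2
          rw [emb1_add] at h3
          linarith [hfpos (j+1)]
      have d58 : ({β (j-1) + β j, β (j+1)} : Multiset OK) ≠ {β (j+1), β (j+1), β (j-2)} :=
        card_ne (by simp)
      have d67 : ({β j + β (j+1), β (j-1)} : Multiset OK) ≠ {β (j+1) + β (j+1), β (j-2)} := by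
        intro h
        rcases pair_eq h with ⟨h1, h2⟩ | ⟨h1, h2⟩
        · exact hea h2.symm
        · have h3 := congrArg (emb1 D) h2
          rw [emb1_add] at h3
          linarith [hfpos (j+1), hfpos j, hfa, hfc]
      have d68 : ({β j + β (j+1), β (j-1)} : Multiset OK) ≠ {β (j+1), β (j+1), β (j-2)} :=
        card_ne (by simp)
      have d78 : ({β (j+1) + β (j+1), β (j-2)} : Multiset OK)
          ≠ {β (j+1), β (j+1), β (j-2)} := card_ne (by simp)
      have hsub : ({({β j + β j + β j} : Multiset OK), {β j + β j, β j}, {β j, β j, β j},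
          {β (j-1), β j, β (j+1)}, {β (j-1) + β j, β (j+1)}, {β j + β (j+1), β (j-1)},
          {β (j+1) + β (j+1), β (j-2)}, {β (j+1), β (j+1), β (j-2)}} : Set (Multiset OK)) ⊆
          {s : Multiset OK | (∀ x ∈ s, TotPos D x) ∧ s.sum = (3:ℤ) • β j} := by
        intro s hs
        simp only [Set.mem_insert_iff, Set.mem_singleton_iff] at hs
        rcases hs with rfl | rfl | rfl | rfl | rfl | rfl | rfl | rfl
        · exact hmem1
        · exact hmem2
        · exact hmem3
        · exact hmemP4
        · exact hmemP5
        · exact hmemP6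
        · exact hmemP7
        · exact hmemP8
      have hcard8 : ({({β j + β j + β j} : Multiset OK), {β j + β j, β j}, {β j, β j, β j},
          {β (j-1), β j, β (j+1)}, {β (j-1) + β j, β (j+1)}, {β j + β (j+1), β (j-1)},
          {β (j+1) + β (j+1), β (j-2)}, {β (j+1), β (j+1), β (j-2)}} :
          Set (Multiset OK)).ncard = 8 := by
        rw [Set.ncard_insert_of_notMem (by
            simp only [Set.mem_insert_iff, Set.mem_singleton_iff]; push_neg
            exact ⟨d12, d13, d14, d15, d16, d17, d18⟩)
            (by exact (((((((Set.finite_singleton _).insert _).insert _).insert _).insert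
              _).insert _).insert _)),
          Set.ncard_insert_of_notMem (by
            simp only [Set.mem_insert_iff, Set.mem_singleton_iff]; push_neg
            exact ⟨d23, d24, d25, d26, d27, d28⟩)
            (by exact ((((((Set.finite_singleton _).insert _).insert _).insert _).insert
              _).insert _)),
          Set.ncard_insert_of_notMem (by
            simp only [Set.mem_insert_iff, Set.mem_singleton_iff]; push_neg
            exact ⟨d34, d35, d36, d37, d38⟩)
            (by exact (((((Set.finite_singleton _).insert _).insert _).insert _).insert _)),
          Set.ncard_insert_of_notMem (by
            simp only [Set.mem_insert_iff, Set.mem_singleton_iff]; push_neg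
            exact ⟨d45, d46, d47, d48⟩)
            (by exact ((((Set.finite_singleton _).insert _).insert _).insert _)),
          Set.ncard_insert_of_notMem (by
            simp only [Set.mem_insert_iff, Set.mem_singleton_iff]; push_neg
            exact ⟨d56, d57, d58⟩)
            (by exact (((Set.finite_singleton _).insert _).insert _)),
          Set.ncard_insert_of_notMem (by
            simp only [Set.mem_insert_iff, Set.mem_singleton_iff]; push_neg
            exact ⟨d67, d68⟩)
            (by exact ((Set.finite_singleton _).insert _)),
          Set.ncard_pair d78]
      calc (8:ℕ) = _ := hcard8.symm
        _ ≤ _ := Set.ncard_le_ncard hsub hfin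
    · -- v (j+1) = 2 : extra partitions {β(j-1)+β(j-1), β(j+2)} and {β(j-1), β(j-1), β(j+2)}
      have hrel2 : (2:ℤ) • β (j+1) = β j + β (j+2) := by
        have h := hβ.rel (j+1)
        rw [hvr2, show j + 1 - 1 = j from by ring, show j + 1 + 1 = j + 2 from by ring] at h
        exact h
      have h4r : β j + β (j+2) = β (j+1) + β (j+1) := by rw [← two_zsmul]; exact hrel2.symm
      have hfd : emb1 D (β (j+1)) < emb1 D (β (j+2)) := hflt (by omega)
      have hxd : β j ≠ β (j+2) := hbne (by omega)
      have had : β (j-1) ≠ β (j+2) := hbne (by omega)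
      have hcd : β (j+1) ≠ β (j+2) := hbne (by omega)
      have hmemP7 : (∀ y ∈ ({β (j-1) + β (j-1), β (j+2)} : Multiset OK), TotPos D y) ∧
          ({β (j-1) + β (j-1), β (j+2)} : Multiset OK).sum = (3:ℤ) • β j := by
        constructor
        · intro y hy
          simp only [Multiset.insert_eq_cons, Multiset.mem_cons, Multiset.mem_singleton] at hy
          rcases hy with rfl | rfl
          · exact TotPos.add (hTP _) (hTP _)
          · exact hTP _
        · simp only [Multiset.insert_eq_cons, Multiset.sum_cons, Multiset.sum_singleton]
          rw [h3x]; linear_combination 2 * h2r + h4r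
      have hmemP8 : (∀ y ∈ ({β (j-1), β (j-1), β (j+2)} : Multiset OK), TotPos D y) ∧
          ({β (j-1), β (j-1), β (j+2)} : Multiset OK).sum = (3:ℤ) • β j := by
        constructor
        · intro y hy
          simp only [Multiset.insert_eq_cons, Multiset.mem_cons, Multiset.mem_singleton] at hy
          rcases hy with rfl | rfl | rfl <;> exact hTP _
        · simp only [Multiset.insert_eq_cons, Multiset.sum_cons, Multiset.sum_singleton]
          rw [h3x]; linear_combination 2 * h2r + h4r
      have hIx : ∀ u w : OK, TotPos D u → TotPos D w → β j ≠ u + w := by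
        intro u w hu hw e
        exact (hβ.indec j).2 ⟨u, w, hu, hw, e⟩
      have hIc : ∀ u w : OK, TotPos D u → TotPos D w → β (j+1) ≠ u + w := by
        intro u w hu hw e
        exact (hβ.indec (j+1)).2 ⟨u, w, hu, hw, e⟩
      have d17 : ({β j + β j + β j} : Multiset OK) ≠ {β (j-1) + β (j-1), β (j+2)} :=
        card_ne (by simp)
      have d18 : ({β j + β j + β j} : Multiset OK) ≠ {β (j-1), β (j-1), β (j+2)} :=
        card_ne (by simp)
      have d27 : ({β j + β j, β j} : Multiset OK) ≠ {β (j-1) + β (j-1), β (j+2)} := by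
        intro h
        rcases pair_eq h with ⟨h1, h2⟩ | ⟨h1, h2⟩
        · exact hxd h2
        · exact hIx _ _ (hTP (j-1)) (hTP (j-1)) h2
      have d28 : ({β j + β j, β j} : Multiset OK) ≠ {β (j-1), β (j-1), β (j+2)} :=
        card_ne (by simp)
      have d37 : ({β j, β j, β j} : Multiset OK) ≠ {β (j-1) + β (j-1), β (j+2)} :=
        card_ne (by simp)
      have d38 : ({β j, β j, β j} : Multiset OK) ≠ {β (j-1), β (j-1), β (j+2)} := by
        refine (ne_of_mem_not_mem
          (show β (j-1) ∈ ({β (j-1), β (j-1), β (j+2)} : Multiset OK) from by simp) ?_).symm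
        simp only [Multiset.insert_eq_cons, Multiset.mem_cons, Multiset.mem_singleton]
        push_neg
        exact ⟨hax, hax, hax⟩
      have d47 : ({β (j-1), β j, β (j+1)} : Multiset OK) ≠ {β (j-1) + β (j-1), β (j+2)} :=
        card_ne (by simp)
      have d48 : ({β (j-1), β j, β (j+1)} : Multiset OK) ≠ {β (j-1), β (j-1), β (j+2)} := by
        refine (ne_of_mem_not_mem
          (show β j ∈ ({β (j-1), β j, β (j+1)} : Multiset OK) from by simp) ?_)
        simp only [Multiset.insert_eq_cons, Multiset.mem_cons, Multiset.mem_singleton]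
        push_neg
        exact ⟨fun e => hax e.symm, fun e => hax e.symm, hxd⟩
      have d57 : ({β (j-1) + β j, β (j+1)} : Multiset OK) ≠ {β (j-1) + β (j-1), β (j+2)} := by
        intro h
        rcases pair_eq h with ⟨h1, h2⟩ | ⟨h1, h2⟩
        · exact hcd h2
        · exact hIc _ _ (hTP (j-1)) (hTP (j-1)) h2
      have d58 : ({β (j-1) + β j, β (j+1)} : Multiset OK) ≠ {β (j-1), β (j-1), β (j+2)} :=
        card_ne (by simp)
      have d67 : ({β j + β (j+1), β (j-1)} : Multiset OK) ≠ {β (j-1) + β (j-1), β (j+2)} := by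
        intro h
        rcases pair_eq h with ⟨h1, h2⟩ | ⟨h1, h2⟩
        · exact had h2
        · have h3 := congrArg (emb1 D) h2
          rw [emb1_add] at h3
          linarith [hfpos (j-1)]
      have d68 : ({β j + β (j+1), β (j-1)} : Multiset OK) ≠ {β (j-1), β (j-1), β (j+2)} :=
        card_ne (by simp)
      have d78 : ({β (j-1) + β (j-1), β (j+2)} : Multiset OK)
          ≠ {β (j-1), β (j-1), β (j+2)} := card_ne (by simp)
      have hsub : ({({β j + β j + β j} : Multiset OK), {β j + β j, β j}, {β j, β j, β j},
          {β (j-1), β j, β (j+1)}, {β (j-1) + β j, β (j+1)}, {β j + β (j+1), β (j-1)},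
          {β (j-1) + β (j-1), β (j+2)}, {β (j-1), β (j-1), β (j+2)}} : Set (Multiset OK)) ⊆
          {s : Multiset OK | (∀ x ∈ s, TotPos D x) ∧ s.sum = (3:ℤ) • β j} := by
        intro s hs
        simp only [Set.mem_insert_iff, Set.mem_singleton_iff] at hs
        rcases hs with rfl | rfl | rfl | rfl | rfl | rfl | rfl | rfl
        · exact hmem1
        · exact hmem2
        · exact hmem3
        · exact hmemP4
        · exact hmemP5
        · exact hmemP6
        · exact hmemP7
        · exact hmemP8
      have hcard8 : ({({β j + β j + β j} : Multiset OK), {β j + β j, β j}, {β j, β j, β j},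
          {β (j-1), β j, β (j+1)}, {β (j-1) + β j, β (j+1)}, {β j + β (j+1), β (j-1)},
          {β (j-1) + β (j-1), β (j+2)}, {β (j-1), β (j-1), β (j+2)}} :
          Set (Multiset OK)).ncard = 8 := by
        rw [Set.ncard_insert_of_notMem (by
            simp only [Set.mem_insert_iff, Set.mem_singleton_iff]; push_neg
            exact ⟨d12, d13, d14, d15, d16, d17, d18⟩)
            (by exact (((((((Set.finite_singleton _).insert _).insert _).insert _).insert
              _).insert _).insert _)),
          Set.ncard_insert_of_notMem (by
            simp only [Set.mem_insert_iff, Set.mem_singleton_iff]; push_neg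
            exact ⟨d23, d24, d25, d26, d27, d28⟩)
            (by exact ((((((Set.finite_singleton _).insert _).insert _).insert _).insert
              _).insert _)),
          Set.ncard_insert_of_notMem (by
            simp only [Set.mem_insert_iff, Set.mem_singleton_iff]; push_neg
            exact ⟨d34, d35, d36, d37, d38⟩)
            (by exact (((((Set.finite_singleton _).insert _).insert _).insert _).insert _)),
          Set.ncard_insert_of_notMem (by
            simp only [Set.mem_insert_iff, Set.mem_singleton_iff]; push_neg
            exact ⟨d45, d46, d47, d48⟩)
            (by exact ((((Set.finite_singleton _).insert _).insert _).insert _)),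
          Set.ncard_insert_of_notMem (by
            simp only [Set.mem_insert_iff, Set.mem_singleton_iff]; push_neg
            exact ⟨d56, d57, d58⟩)
            (by exact (((Set.finite_singleton _).insert _).insert _)),
          Set.ncard_insert_of_notMem (by
            simp only [Set.mem_insert_iff, Set.mem_singleton_iff]; push_neg
            exact ⟨d67, d68⟩)
            (by exact ((Set.finite_singleton _).insert _)),
          Set.ncard_pair d78]
      calc (8:ℕ) = _ := hcard8.symm
        _ ≤ _ := Set.ncard_le_ncard hsub hfin
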